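/- arXiv:1310.0398 — 5 statements merged into one kernel-verified Lean document; each statement's English description precedes it below -/
import Mathlib

section
/- Consider a structured 3DM' instance with parameters n, q, m (n = qm), blocks W_k, coloring χ, and maps f and g as defined in the context. Then for every proper matching M and every block index k ∈ {0,…,m−1}, the map f is injective on the set Q_k of all elements occurring in matches e ∈ M with e ∩ W_k ≠ ∅. -/
/-- The elements of the 3DM' instance: `w_i`, `w̄_i`, `s_j`, `a_i`, `b_i`. -/
inductive Elem : Type
  | w (i : ℕ)
  | wbar (i : ℕ)
  | s (j : ℕ)
  | a (i : ℕ)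
  | b (i : ℕ)
  deriving DecidableEq

/-- `ζ(3k+1) = 3k+2`, `ζ(3k+2) = 3k+3`, `ζ(3k+3) = 3k+1`. -/
def zeta (i : ℕ) : ℕ :=
  if i % 3 = 1 then i + 1 else if i % 3 = 2 then i + 1 else i - 2

/-- The one-element matches `{w_i}`, `{w̄_i}`. -/
def T1 (n : ℕ) : Finset (Finset Elem) :=
  (Finset.Icc 1 (3 * n)).image (fun i => {Elem.w i}) ∪
    (Finset.Icc 1 (3 * n)).image (fun i => {Elem.wbar i})

/-- The matches `{w_i, a_i, b_i}` and `{w̄_i, a_i, b_{ζ(i)}}`. -/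
def T3 (n : ℕ) : Finset (Finset Elem) :=
  (Finset.Icc 1 (3 * n)).image (fun i => {Elem.w i, Elem.a i, Elem.b i}) ∪
    (Finset.Icc 1 (3 * n)).image (fun i => {Elem.wbar i, Elem.a i, Elem.b (zeta i)})

/-- The ground set `W ∪ X ∪ Y`. -/
def allElems (n s : ℕ) : Finset Elem :=
  (Finset.Icc 1 (3 * n)).image Elem.w ∪ (Finset.Icc 1 (3 * n)).image Elem.wbar ∪
    (Finset.Icc 1 s).image Elem.s ∪ (Finset.Icc 1 (3 * n)).image Elem.a ∪
    (Finset.Icc 1 (3 * n)).image Elem.b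

/-- A proper matching: a subset of the matches in which every element of the
ground set appears exactly once. -/
def ProperMatching (n s : ℕ) (T2 M : Finset (Finset Elem)) : Prop :=
  M ⊆ T1 n ∪ T2 ∪ T3 n ∧ ∀ η ∈ allElems n s, (M.filter (fun e => η ∈ e)).card = 1

/-- Membership of an element in the block `W_k = {w_i, w̄_i : 3kq < i ≤ 3kq + 3q}`. -/
def inBlock (q k : ℕ) (η : Elem) : Prop :=
  ∃ i, 3 * k * q < i ∧ i ≤ 3 * k * q + 3 * q ∧ (η = Elem.w i ∨ η = Elem.wbar i)

/-- The bit-allocation map `f`: writing `i = 3kq + i₀` with `1 ≤ i₀ ≤ 3q`,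
`f(b_i) = i₀`, `f(a_i) = 3q + i₀`, `f(w_i) = 6q + i₀`, `f(w̄_i) = 9q + i₀`,
and `f(s_j) = 12q + χ(j)`. -/
def fmap (q : ℕ) (χ : ℕ → ℕ) : Elem → ℕ
  | .b i => (i - 1) % (3 * q) + 1
  | .a i => 3 * q + ((i - 1) % (3 * q) + 1)
  | .w i => 6 * q + ((i - 1) % (3 * q) + 1)
  | .wbar i => 9 * q + ((i - 1) % (3 * q) + 1)
  | .s j => 12 * q + χ j

/-- for every proper matching `M` and every block index `k < m`,
the map `f` is injective on the set of all elements occurring in matches of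
`M` that meet the block `W_k`. -/
theorem fmap_injOn_block (n q m s τ : ℕ) (hq : 1 ≤ q) (hm : 1 ≤ m) (hqm : n = q * m)
    (T2 : Finset (Finset Elem))
    (hT2form : ∀ e ∈ T2, ∃ i ∈ Finset.Icc 1 (3 * n), ∃ j ∈ Finset.Icc 1 s,
      e = {Elem.w i, Elem.s j} ∨ e = {Elem.wbar i, Elem.s j})
    (hT2w : ∀ i ∈ Finset.Icc 1 (3 * n),
      ((T2.filter (fun e => Elem.w i ∈ e)).card = 1 ∧
        (T2.filter (fun e => Elem.wbar i ∈ e)).card = 0) ∨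
      ((T2.filter (fun e => Elem.w i ∈ e)).card = 0 ∧
        (T2.filter (fun e => Elem.wbar i ∈ e)).card = 1))
    (hT2s : ∀ j ∈ Finset.Icc 1 s, (T2.filter (fun e => Elem.s j ∈ e)).card ≤ 3)
    (χ : ℕ → ℕ)
    (hχrange : ∀ j ∈ Finset.Icc 1 s, χ j ∈ Finset.Icc 1 τ)
    (hχ : ∀ j ∈ Finset.Icc 1 s, ∀ j' ∈ Finset.Icc 1 s, j ≠ j' → ∀ k < m,
      (∃ e ∈ T2, Elem.s j ∈ e ∧ ∃ η ∈ e, inBlock q k η) →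
      (∃ e ∈ T2, Elem.s j' ∈ e ∧ ∃ η ∈ e, inBlock q k η) → χ j ≠ χ j')
    (hclass : ∀ t, ((Finset.Icc 1 s).filter (fun j => χ j = t)).card ≤ m)
    (M : Finset (Finset Elem)) (hM : ProperMatching n s T2 M) :
    ∀ k < m, Set.InjOn (fmap q χ)
      {η : Elem | ∃ e ∈ M, η ∈ e ∧ ∃ η' ∈ e, inBlock q k η'} := by
  intro k hk
  obtain ⟨B, hB⟩ : ∃ B, B = k * q := ⟨_, rfl⟩
  have hB3 : 3 * k * q = 3 * B := by rw [hB]; ring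
  have hB3' : k * (3 * q) = 3 * B := by rw [hB]; ring
  have hmod : ∀ i : ℕ, 3 * B < i → i ≤ 3 * B + 3 * q →
      (i - 1) % (3 * q) = i - 1 - 3 * B := by
    intro i h1 h2
    have h3 : i - 1 = (i - 1 - 3 * B) + k * (3 * q) := by rw [hB3']; omega
    calc (i - 1) % (3 * q) = ((i - 1 - 3 * B) + k * (3 * q)) % (3 * q) := by rw [← h3]
      _ = (i - 1 - 3 * B) % (3 * q) := Nat.add_mul_mod_self_right _ _ _
      _ = i - 1 - 3 * B := Nat.mod_eq_of_lt (by omega)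
  have hzeta : ∀ i : ℕ, 3 * B < i → i ≤ 3 * B + 3 * q →
      3 * B < zeta i ∧ zeta i ≤ 3 * B + 3 * q := by
    intro i h1 h2
    unfold zeta
    split_ifs with ha hb <;> omega
  have key : ∀ e ∈ M, (∃ η' ∈ e, inBlock q k η') → ∀ η ∈ e,
      (∃ i, 3 * B < i ∧ i ≤ 3 * B + 3 * q ∧
        (η = Elem.w i ∨ η = Elem.wbar i ∨ η = Elem.a i ∨ η = Elem.b i)) ∨
      (∃ j, j ∈ Finset.Icc 1 s ∧ η = Elem.s j ∧
        ∃ e' ∈ T2, Elem.s j ∈ e' ∧ ∃ η'' ∈ e', inBlock q k η'') := by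
    intro e heM hblk η hη
    obtain ⟨η', hη'e0, hIB0⟩ := hblk
    obtain ⟨i0, hi0a, hi0b, hc⟩ := hIB0
    rw [hB3] at hi0a hi0b
    have heT := hM.1 heM
    rcases Finset.mem_union.1 heT with hT12 | hT3m
    · rcases Finset.mem_union.1 hT12 with hT1m | hT2e
      · -- e ∈ T1
        simp only [T1, Finset.mem_union, Finset.mem_image, Finset.mem_Icc] at hT1m
        rcases hT1m with ⟨i, _, rfl⟩ | ⟨i, _, rfl⟩ <;>
          simp only [Finset.mem_singleton] at hη'e0 hη <;> subst hη <;> subst hη'e0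
        · rcases hc with h | h
          · injection h with h'; subst h'; exact Or.inl ⟨i, hi0a, hi0b, Or.inl rfl⟩
          · injection h
        · rcases hc with h | h
          · injection h
          · injection h with h'; subst h'
            exact Or.inl ⟨i, hi0a, hi0b, Or.inr (Or.inl rfl)⟩
      · -- e ∈ T2
        obtain ⟨i, hi, j, hj, hform⟩ := hT2form e hT2e
        have hpack : ∃ e' ∈ T2, Elem.s j ∈ e' ∧ ∃ η'' ∈ e', inBlock q k η'' := by
          refine ⟨e, hT2e, ?_, η', hη'e0, i0, ?_, ?_, hc⟩
          · rcases hform with rfl | rfl <;> simp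
          · rw [hB3]; exact hi0a
          · rw [hB3]; exact hi0b
        rcases hform with rfl | rfl <;>
          simp only [Finset.mem_insert, Finset.mem_singleton] at hη'e0 hη
        · have hii : 3 * B < i ∧ i ≤ 3 * B + 3 * q := by
            rcases hη'e0 with h1 | h1 <;> rcases hc with h2 | h2 <;> rw [h1] at h2 <;>
              first
              | (injection h2 with h'; subst h'; exact ⟨hi0a, hi0b⟩)
              | injection h2
          rcases hη with rfl | rfl
          · exact Or.inl ⟨i, hii.1, hii.2, Or.inl rfl⟩
          · exact Or.inr ⟨j, hj, rfl, hpack⟩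
        · have hii : 3 * B < i ∧ i ≤ 3 * B + 3 * q := by
            rcases hη'e0 with h1 | h1 <;> rcases hc with h2 | h2 <;> rw [h1] at h2 <;>
              first
              | (injection h2 with h'; subst h'; exact ⟨hi0a, hi0b⟩)
              | injection h2
          rcases hη with rfl | rfl
          · exact Or.inl ⟨i, hii.1, hii.2, Or.inr (Or.inl rfl)⟩
          · exact Or.inr ⟨j, hj, rfl, hpack⟩
    · -- e ∈ T3
      simp only [T3, Finset.mem_union, Finset.mem_image, Finset.mem_Icc] at hT3m
      rcases hT3m with ⟨i, hi, rfl⟩ | ⟨i, hi, rfl⟩ <;>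
        simp only [Finset.mem_insert, Finset.mem_singleton] at hη'e0 hη
      · have hii : 3 * B < i ∧ i ≤ 3 * B + 3 * q := by
          rcases hη'e0 with h1 | h1 | h1 <;> rcases hc with h2 | h2 <;> rw [h1] at h2 <;>
            first
            | (injection h2 with h'; subst h'; exact ⟨hi0a, hi0b⟩)
            | injection h2
        rcases hη with rfl | rfl | rfl
        · exact Or.inl ⟨i, hii.1, hii.2, Or.inl rfl⟩
        · exact Or.inl ⟨i, hii.1, hii.2, Or.inr (Or.inr (Or.inl rfl))⟩
        · exact Or.inl ⟨i, hii.1, hii.2, Or.inr (Or.inr (Or.inr rfl))⟩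
      · have hii : 3 * B < i ∧ i ≤ 3 * B + 3 * q := by
          rcases hη'e0 with h1 | h1 | h1 <;> rcases hc with h2 | h2 <;> rw [h1] at h2 <;>
            first
            | (injection h2 with h'; subst h'; exact ⟨hi0a, hi0b⟩)
            | injection h2
        rcases hη with rfl | rfl | rfl
        · exact Or.inl ⟨i, hii.1, hii.2, Or.inr (Or.inl rfl)⟩
        · exact Or.inl ⟨i, hii.1, hii.2, Or.inr (Or.inr (Or.inl rfl))⟩
        · exact Or.inl ⟨zeta i, (hzeta i hii.1 hii.2).1, (hzeta i hii.1 hii.2).2,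
            Or.inr (Or.inr (Or.inr rfl))⟩
  intro η1 hη1 η2 hη2 hf
  obtain ⟨e1, he1M, hη1e, hblk1⟩ := hη1
  obtain ⟨e2, he2M, hη2e, hblk2⟩ := hη2
  have c1 := key e1 he1M hblk1 η1 hη1e
  have c2 := key e2 he2M hblk2 η2 hη2e
  rcases c1 with ⟨i1, h1a, h1b, hc1⟩ | ⟨j1, hj1, rfl, hw1⟩ <;>
    rcases c2 with ⟨i2, h2a, h2b, hc2⟩ | ⟨j2, hj2, rfl, hw2⟩
  · have hm1 := hmod i1 h1a h1b
    have hm2 := hmod i2 h2a h2b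
    rcases hc1 with rfl | rfl | rfl | rfl <;> rcases hc2 with rfl | rfl | rfl | rfl <;>
      simp only [fmap, hm1, hm2] at hf <;>
      first
      | exact congrArg Elem.w (by omega)
      | exact congrArg Elem.wbar (by omega)
      | exact congrArg Elem.a (by omega)
      | exact congrArg Elem.b (by omega)
      | (exfalso; omega)
  · exfalso
    have hr2 := Finset.mem_Icc.1 (hχrange j2 hj2)
    have hm1 := hmod i1 h1a h1b
    rcases hc1 with rfl | rfl | rfl | rfl <;> simp only [fmap, hm1] at hf <;> omega
  · exfalso
    have hr1 := Finset.mem_Icc.1 (hχrange j1 hj1)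
    have hm2 := hmod i2 h2a h2b
    rcases hc2 with rfl | rfl | rfl | rfl <;> simp only [fmap, hm2] at hf <;> omega
  · simp only [fmap] at hf
    by_cases hjj : j1 = j2
    · rw [hjj]
    · exact absurd (by omega : χ j1 = χ j2) (hχ j1 hj1 j2 hj2 hjj k hk hw1 hw2)
end

section
/- Let φ' be a CNF formula over variables z_1,…,z_{3n} whose clause set is C1 ∪ C2 with the structure described in the context, and let (W, X, Y; T1, T2, T3) be the 3DM' instance constructed from φ' as described in the context. Then φ' is satisfiable if and only if the 3DM' instance admits an exact cover, i.e., a subset M ⊆ T1 ∪ T2 ∪ T3 such that every element of W ∪ X ∪ Y belongs to exactly one member of M. -/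
/-- The matches `{w_i, s_j}` (when `z_i` occurs positively in `c_j`) and
`{w̄_i, s_j}` (when `¬z_i` occurs in `c_j`). -/
def T2 (n s : ℕ) (cl : ℕ → Finset (ℕ × Bool)) : Finset (Finset Elem) :=
  (((Finset.Icc 1 (3 * n)) ×ˢ (Finset.Icc 1 s)).filter
      (fun p => (p.1, true) ∈ cl p.2)).image (fun p => {Elem.w p.1, Elem.s p.2}) ∪
    (((Finset.Icc 1 (3 * n)) ×ˢ (Finset.Icc 1 s)).filter
      (fun p => (p.1, false) ∈ cl p.2)).image (fun p => {Elem.wbar p.1, Elem.s p.2})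

/-! ### Auxiliary lemmas about `zeta` -/

lemma zeta_mem {n i : ℕ} (h : i ∈ Finset.Icc 1 (3 * n)) :
    zeta i ∈ Finset.Icc 1 (3 * n) := by
  simp only [Finset.mem_Icc] at *
  unfold zeta; split_ifs <;> omega

lemma zeta3 {i : ℕ} (h : 1 ≤ i) : zeta (zeta (zeta i)) = i := by
  unfold zeta; split_ifs <;> omega

lemma zeta_inj {i i' : ℕ} (h : 1 ≤ i) (h' : 1 ≤ i') (e : zeta i = zeta i') : i = i' := by
  have h1 := zeta3 h
  have h2 := zeta3 h'
  rw [e] at h1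
  exact h1.symm.trans h2

lemma zeta_1 (k : ℕ) : zeta (3 * k + 1) = 3 * k + 2 := by
  unfold zeta; split_ifs <;> omega
lemma zeta_2 (k : ℕ) : zeta (3 * k + 2) = 3 * k + 3 := by
  unfold zeta; split_ifs <;> omega
lemma zeta_3 (k : ℕ) : zeta (3 * k + 3) = 3 * k + 1 := by
  unfold zeta; split_ifs <;> omega

/-! ### Occurrence uniqueness -/

lemma occ_unique {s i : ℕ} {cl : ℕ → Finset (ℕ × Bool)}
    (hocc1 : ∑ j ∈ Finset.Icc 1 s, ((cl j).filter (fun l => l.1 = i)).card = 1)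
    {j j' : ℕ} {b b' : Bool} (hj : j ∈ Finset.Icc 1 s) (hj' : j' ∈ Finset.Icc 1 s)
    (hb : (i, b) ∈ cl j) (hb' : (i, b') ∈ cl j') : j = j' ∧ b = b' := by
  by_contra hcon
  rcases eq_or_ne j j' with rfl | hne
  · have hbb' : b ≠ b' := fun h => hcon ⟨rfl, h⟩
    have h2 : 1 < ((cl j).filter (fun l => l.1 = i)).card :=
      Finset.one_lt_card.mpr ⟨(i,b), by simp [hb], (i,b'), by simp [hb'], by simp [hbb']⟩
    have h3 := Finset.single_le_sum (f := fun j => ((cl j).filter (fun l => l.1 = i)).card)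
      (fun _ _ => Nat.zero_le _) hj
    omega
  · have h1 : 0 < ((cl j).filter (fun l => l.1 = i)).card :=
      Finset.card_pos.mpr ⟨(i,b), by simp [hb]⟩
    have h1' : 0 < ((cl j').filter (fun l => l.1 = i)).card :=
      Finset.card_pos.mpr ⟨(i,b'), by simp [hb']⟩
    have hsub : ({j, j'} : Finset ℕ) ⊆ Finset.Icc 1 s := by
      intro x hx; simp at hx; rcases hx with rfl|rfl <;> assumption
    have h4 := Finset.sum_le_sum_of_subset (f := fun j => ((cl j).filter (fun l => l.1 = i)).card) hsub
    rw [Finset.sum_pair hne] at h4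
    omega

/-! ### The candidate cover and membership lemmas -/

def gfun (v : ℕ → Bool) (i : ℕ) : Finset Elem :=
  if v i = true then {Elem.wbar i, Elem.a i, Elem.b (zeta i)} else {Elem.w i, Elem.a i, Elem.b i}

def hfun (f : ℕ → ℕ × Bool) (j : ℕ) : Finset Elem :=
  if (f j).2 = true then {Elem.w (f j).1, Elem.s j} else {Elem.wbar (f j).1, Elem.s j}

open Classical in
noncomputable def Msol (n s : ℕ) (v : ℕ → Bool) (f : ℕ → ℕ × Bool) : Finset (Finset Elem) :=
  (Finset.Icc 1 (3*n)).image (gfun v) ∪ (Finset.Icc 1 s).image (hfun f) ∪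
  (((Finset.Icc 1 (3*n)).filter
      (fun i => v i = true ∧ ∀ j ∈ Finset.Icc 1 s, f j ≠ (i, true))).image (fun i => {Elem.w i})) ∪
  (((Finset.Icc 1 (3*n)).filter
      (fun i => v i = false ∧ ∀ j ∈ Finset.Icc 1 s, f j ≠ (i, false))).image (fun i => {Elem.wbar i}))

lemma mem_Msol {n s : ℕ} {v : ℕ → Bool} {f : ℕ → ℕ × Bool} {e : Finset Elem} :
    e ∈ Msol n s v f ↔
    (∃ i ∈ Finset.Icc 1 (3*n), e = gfun v i) ∨
    (∃ j ∈ Finset.Icc 1 s, e = hfun f j) ∨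
    (∃ i ∈ Finset.Icc 1 (3*n), (v i = true ∧ ∀ j ∈ Finset.Icc 1 s, f j ≠ (i, true)) ∧ e = {Elem.w i}) ∨
    (∃ i ∈ Finset.Icc 1 (3*n), (v i = false ∧ ∀ j ∈ Finset.Icc 1 s, f j ≠ (i, false)) ∧ e = {Elem.wbar i}) := by
  simp only [Msol, Finset.mem_union, Finset.mem_image, Finset.mem_filter, or_assoc]
  constructor
  · rintro (⟨i,hi,rfl⟩|⟨j,hj,rfl⟩|⟨i,⟨hi,hp⟩,rfl⟩|⟨i,⟨hi,hp⟩,rfl⟩)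
    · exact Or.inl ⟨i, hi, rfl⟩
    · exact Or.inr (Or.inl ⟨j, hj, rfl⟩)
    · exact Or.inr (Or.inr (Or.inl ⟨i, hi, hp, rfl⟩))
    · exact Or.inr (Or.inr (Or.inr ⟨i, hi, hp, rfl⟩))
  · rintro (⟨i,hi,rfl⟩|⟨j,hj,rfl⟩|⟨i,hi,hp,rfl⟩|⟨i,hi,hp,rfl⟩)
    · exact Or.inl ⟨i, hi, rfl⟩
    · exact Or.inr (Or.inl ⟨j, hj, rfl⟩)
    · exact Or.inr (Or.inr (Or.inl ⟨i, ⟨hi, hp⟩, rfl⟩))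
    · exact Or.inr (Or.inr (Or.inr ⟨i, ⟨hi, hp⟩, rfl⟩))

lemma a_mem_gfun {v : ℕ → Bool} {i i' : ℕ} : Elem.a i ∈ gfun v i' ↔ i = i' := by
  unfold gfun; split_ifs <;> simp
lemma b_mem_gfun {v : ℕ → Bool} {i i' : ℕ} :
    Elem.b i ∈ gfun v i' ↔ (v i' = true ∧ i = zeta i') ∨ (v i' = false ∧ i = i') := by
  unfold gfun; split_ifs with h <;> simp [h]
lemma w_mem_gfun {v : ℕ → Bool} {i i' : ℕ} : Elem.w i ∈ gfun v i' ↔ v i' = false ∧ i = i' := by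
  unfold gfun; split_ifs with h <;> simp [h]
lemma wbar_mem_gfun {v : ℕ → Bool} {i i' : ℕ} : Elem.wbar i ∈ gfun v i' ↔ v i' = true ∧ i = i' := by
  unfold gfun; split_ifs with h <;> simp [h]
lemma s_not_mem_gfun {v : ℕ → Bool} {j i' : ℕ} : Elem.s j ∉ gfun v i' := by
  unfold gfun; split_ifs <;> simp
lemma s_mem_hfun {f : ℕ → ℕ × Bool} {j j' : ℕ} : Elem.s j ∈ hfun f j' ↔ j = j' := by
  unfold hfun; split_ifs <;> simp
lemma w_mem_hfun {f : ℕ → ℕ × Bool} {i j : ℕ} :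
    Elem.w i ∈ hfun f j ↔ (f j).2 = true ∧ i = (f j).1 := by
  unfold hfun; split_ifs with h <;> simp [h]
lemma wbar_mem_hfun {f : ℕ → ℕ × Bool} {i j : ℕ} :
    Elem.wbar i ∈ hfun f j ↔ (f j).2 = false ∧ i = (f j).1 := by
  unfold hfun; split_ifs with h <;> simp [h, Bool.not_eq_true] at *
lemma a_not_mem_hfun {f : ℕ → ℕ × Bool} {i j : ℕ} : Elem.a i ∉ hfun f j := by
  unfold hfun; split_ifs <;> simp
lemma b_not_mem_hfun {f : ℕ → ℕ × Bool} {i j : ℕ} : Elem.b i ∉ hfun f j := by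
  unfold hfun; split_ifs <;> simp

lemma filter_card_one {α : Type*} [DecidableEq α] {M : Finset α} {p : α → Prop}
    [DecidablePred p] {e₀ : α}
    (h1 : e₀ ∈ M) (h2 : p e₀) (h3 : ∀ e ∈ M, p e → e = e₀) : (M.filter p).card = 1 := by
  rw [Finset.card_eq_one]
  refine ⟨e₀, ?_⟩
  ext e
  simp only [Finset.mem_filter, Finset.mem_singleton]
  exact ⟨fun ⟨he, hp⟩ => h3 e he hp, fun h => h ▸ ⟨h1, h2⟩⟩

/-! ### Membership in `allElems` -/

lemma w_mem_all {n s i : ℕ} (hi : i ∈ Finset.Icc 1 (3*n)) : Elem.w i ∈ allElems n s := by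
  unfold allElems
  simp only [Finset.mem_union, Finset.mem_image]
  exact Or.inl (Or.inl (Or.inl (Or.inl ⟨i, hi, rfl⟩)))
lemma wbar_mem_all {n s i : ℕ} (hi : i ∈ Finset.Icc 1 (3*n)) : Elem.wbar i ∈ allElems n s := by
  unfold allElems
  simp only [Finset.mem_union, Finset.mem_image]
  exact Or.inl (Or.inl (Or.inl (Or.inr ⟨i, hi, rfl⟩)))
lemma s_mem_all {n s j : ℕ} (hj : j ∈ Finset.Icc 1 s) : Elem.s j ∈ allElems n s := by
  unfold allElems
  simp only [Finset.mem_union, Finset.mem_image]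
  exact Or.inl (Or.inl (Or.inr ⟨j, hj, rfl⟩))
lemma a_mem_all {n s i : ℕ} (hi : i ∈ Finset.Icc 1 (3*n)) : Elem.a i ∈ allElems n s := by
  unfold allElems
  simp only [Finset.mem_union, Finset.mem_image]
  exact Or.inl (Or.inr ⟨i, hi, rfl⟩)
lemma b_mem_all {n s i : ℕ} (hi : i ∈ Finset.Icc 1 (3*n)) : Elem.b i ∈ allElems n s := by
  unfold allElems
  simp only [Finset.mem_union, Finset.mem_image]
  exact Or.inr ⟨i, hi, rfl⟩

/-! ### `v` is constant along `zeta` -/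

lemma v_zeta {n : ℕ} (v : ℕ → Bool)
    (hv2 : ∀ k < n,
      (v (3 * k + 1) = true ∨ v (3 * k + 2) = false) ∧
      (v (3 * k + 2) = true ∨ v (3 * k + 3) = false) ∧
      (v (3 * k + 3) = true ∨ v (3 * k + 1) = false)) :
    ∀ i ∈ Finset.Icc 1 (3*n), v (zeta i) = v i := by
  have htrip : ∀ k < n, v (3*k+1) = v (3*k+2) ∧ v (3*k+2) = v (3*k+3) := by
    intro k hk
    obtain ⟨h1, h2, h3⟩ := hv2 k hk
    rcases h1 with h1|h1 <;> rcases h2 with h2|h2 <;> rcases h3 with h3|h3 <;> simp_all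
  intro i hi
  simp only [Finset.mem_Icc] at hi
  have h3 : i % 3 = 0 ∨ i % 3 = 1 ∨ i % 3 = 2 := by omega
  rcases h3 with h | h | h
  · obtain ⟨k, rfl⟩ : ∃ k, i = 3*k+3 := ⟨i/3 - 1, by omega⟩
    have hk : k < n := by omega
    rw [zeta_3]
    exact (htrip k hk).1.trans (htrip k hk).2
  · obtain ⟨k, rfl⟩ : ∃ k, i = 3*k+1 := ⟨i/3, by omega⟩
    have hk : k < n := by omega
    rw [zeta_1]
    exact (htrip k hk).1.symm
  · obtain ⟨k, rfl⟩ : ∃ k, i = 3*k+2 := ⟨i/3, by omega⟩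
    have hk : k < n := by omega
    rw [zeta_2]
    exact (htrip k hk).2.symm

lemma clauses_of_v_zeta {n : ℕ} (v : ℕ → Bool)
    (h : ∀ i ∈ Finset.Icc 1 (3*n), v (zeta i) = v i) :
    ∀ k < n,
      (v (3 * k + 1) = true ∨ v (3 * k + 2) = false) ∧
      (v (3 * k + 2) = true ∨ v (3 * k + 3) = false) ∧
      (v (3 * k + 3) = true ∨ v (3 * k + 1) = false) := by
  intro k hk
  have h1 : (3*k+1) ∈ Finset.Icc 1 (3*n) := by simp only [Finset.mem_Icc]; omega
  have h2 : (3*k+2) ∈ Finset.Icc 1 (3*n) := by simp only [Finset.mem_Icc]; omega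
  have h3 : (3*k+3) ∈ Finset.Icc 1 (3*n) := by simp only [Finset.mem_Icc]; omega
  have e1 := h _ h1; rw [zeta_1] at e1
  have e2 := h _ h2; rw [zeta_2] at e2
  have e3 := h _ h3; rw [zeta_3] at e3
  cases hb : v (3*k+1) <;> simp_all

/-! ### Subset property -/

lemma Msol_subset {n s : ℕ} {cl : ℕ → Finset (ℕ × Bool)}
    (hvar : ∀ j ∈ Finset.Icc 1 s, ∀ l ∈ cl j, l.1 ∈ Finset.Icc 1 (3 * n))
    {v : ℕ → Bool} {f : ℕ → ℕ × Bool}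
    (hf : ∀ j ∈ Finset.Icc 1 s, f j ∈ cl j ∧ v (f j).1 = (f j).2) :
    Msol n s v f ⊆ T1 n ∪ T2 n s cl ∪ T3 n := by
  intro e he
  rw [mem_Msol] at he
  simp only [Finset.mem_union]
  rcases he with ⟨i,hi,rfl⟩|⟨j,hj,rfl⟩|⟨i,hi,_,rfl⟩|⟨i,hi,_,rfl⟩
  · right
    unfold T3
    simp only [Finset.mem_union, Finset.mem_image]
    by_cases hv : v i = true
    · exact Or.inr ⟨i, hi, by simp [gfun, hv]⟩
    · exact Or.inl ⟨i, hi, by simp [gfun, hv]⟩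
  · left; right
    obtain ⟨hfj, hvfj⟩ := hf j hj
    have h1 : (f j).1 ∈ Finset.Icc 1 (3*n) := hvar j hj (f j) hfj
    unfold T2
    simp only [Finset.mem_union, Finset.mem_image, Finset.mem_filter, Finset.mem_product]
    by_cases hb : (f j).2 = true
    · refine Or.inl ⟨((f j).1, j), ⟨⟨h1, hj⟩, ?_⟩, by simp [hfun, hb]⟩
      have : ((f j).1, (f j).2) ∈ cl j := by rw [Prod.mk.eta]; exact hfj
      rwa [hb] at this
    · have hb' : (f j).2 = false := by simpa using hb
      refine Or.inr ⟨((f j).1, j), ⟨⟨h1, hj⟩, ?_⟩, by simp [hfun, hb']⟩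
      have : ((f j).1, (f j).2) ∈ cl j := by rw [Prod.mk.eta]; exact hfj
      rwa [hb'] at this
  · left; left
    unfold T1
    simp only [Finset.mem_union, Finset.mem_image]
    exact Or.inl ⟨i, hi, rfl⟩
  · left; left
    unfold T1
    simp only [Finset.mem_union, Finset.mem_image]
    exact Or.inr ⟨i, hi, rfl⟩

/-! ### Coverage property -/

lemma Msol_cover {n s : ℕ} {cl : ℕ → Finset (ℕ × Bool)}
    (hocc : ∀ i ∈ Finset.Icc 1 (3 * n),
      ∑ j ∈ Finset.Icc 1 s, ((cl j).filter (fun l => l.1 = i)).card = 1)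
    {v : ℕ → Bool} (hvz : ∀ i ∈ Finset.Icc 1 (3*n), v (zeta i) = v i)
    {f : ℕ → ℕ × Bool}
    (hf : ∀ j ∈ Finset.Icc 1 s, f j ∈ cl j ∧ v (f j).1 = (f j).2) :
    ∀ η ∈ allElems n s, ((Msol n s v f).filter (fun e => η ∈ e)).card = 1 := by
  classical
  intro η hη
  unfold allElems at hη
  simp only [Finset.mem_union, Finset.mem_image, or_assoc] at hη
  rcases hη with ⟨i,hi,rfl⟩|⟨i,hi,rfl⟩|⟨j,hj,rfl⟩|⟨i,hi,rfl⟩|⟨i,hi,rfl⟩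
  -- case η = w i
  · by_cases hvi : v i = true
    · by_cases hu : ∃ j ∈ Finset.Icc 1 s, f j = (i, true)
      · obtain ⟨j₀, hj₀, hfj₀⟩ := hu
        refine filter_card_one (mem_Msol.mpr (Or.inr (Or.inl ⟨j₀, hj₀, rfl⟩)))
          (w_mem_hfun.mpr ⟨by rw [hfj₀], by rw [hfj₀]⟩) ?_
        intro e he hae
        rcases mem_Msol.mp he with ⟨i',hi',rfl⟩|⟨j',hj',rfl⟩|⟨i',hi',hp,rfl⟩|⟨i',hi',hp,rfl⟩
        · obtain ⟨hv', rfl⟩ := w_mem_gfun.mp hae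
          exact absurd hvi (by simp [hv'])
        · obtain ⟨hb2, hb1⟩ := w_mem_hfun.mp hae
          have hfj' : f j' = (i, true) := Prod.ext hb1.symm hb2
          have hcl' : (i, true) ∈ cl j' := by
            have := (hf j' hj').1; rwa [← Prod.mk.eta (p := f j'), hfj'] at this
          have hcl₀ : (i, true) ∈ cl j₀ := by
            have := (hf j₀ hj₀).1; rwa [← Prod.mk.eta (p := f j₀), hfj₀] at this
          obtain ⟨rfl, -⟩ := occ_unique (hocc i hi) hj' hj₀ hcl' hcl₀
          rfl
        · have : i = i' := by simpa using hae
          subst this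
          exact absurd hfj₀ (hp.2 j₀ hj₀)
        · simp at hae
      · refine filter_card_one
          (mem_Msol.mpr (Or.inr (Or.inr (Or.inl ⟨i, hi,
            ⟨hvi, fun j hj hfj => hu ⟨j, hj, hfj⟩⟩, rfl⟩))))
          (Finset.mem_singleton_self _) ?_
        intro e he hae
        rcases mem_Msol.mp he with ⟨i',hi',rfl⟩|⟨j',hj',rfl⟩|⟨i',hi',hp,rfl⟩|⟨i',hi',hp,rfl⟩
        · obtain ⟨hv', rfl⟩ := w_mem_gfun.mp hae
          exact absurd hvi (by simp [hv'])
        · obtain ⟨hb2, hb1⟩ := w_mem_hfun.mp hae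
          exact absurd ⟨j', hj', Prod.ext hb1.symm hb2⟩ hu
        · have : i = i' := by simpa using hae
          subst this; rfl
        · simp at hae
    · have hvi' : v i = false := by simpa using hvi
      refine filter_card_one (mem_Msol.mpr (Or.inl ⟨i, hi, rfl⟩))
        (w_mem_gfun.mpr ⟨hvi', rfl⟩) ?_
      intro e he hae
      rcases mem_Msol.mp he with ⟨i',hi',rfl⟩|⟨j',hj',rfl⟩|⟨i',hi',hp,rfl⟩|⟨i',hi',hp,rfl⟩
      · obtain ⟨hv', rfl⟩ := w_mem_gfun.mp hae
        rfl
      · obtain ⟨hb2, hb1⟩ := w_mem_hfun.mp hae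
        have := (hf j' hj').2
        rw [← hb1, hb2] at this
        exact absurd this hvi
      · obtain ⟨hpv, -⟩ := hp
        have : i = i' := by simpa using hae
        subst this
        exact absurd hpv hvi
      · simp at hae
  -- case η = wbar i
  · by_cases hvi : v i = true
    · refine filter_card_one (mem_Msol.mpr (Or.inl ⟨i, hi, rfl⟩))
        (wbar_mem_gfun.mpr ⟨hvi, rfl⟩) ?_
      intro e he hae
      rcases mem_Msol.mp he with ⟨i',hi',rfl⟩|⟨j',hj',rfl⟩|⟨i',hi',hp,rfl⟩|⟨i',hi',hp,rfl⟩
      · obtain ⟨hv', rfl⟩ := wbar_mem_gfun.mp hae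
        rfl
      · obtain ⟨hb2, hb1⟩ := wbar_mem_hfun.mp hae
        have := (hf j' hj').2
        rw [← hb1, hb2] at this
        exact absurd hvi (by simp [← this])
      · simp at hae
      · obtain ⟨hpv, -⟩ := hp
        have : i = i' := by simpa using hae
        subst this
        exact absurd hvi (by simp [hpv])
    · have hvi' : v i = false := by simpa using hvi
      by_cases hu : ∃ j ∈ Finset.Icc 1 s, f j = (i, false)
      · obtain ⟨j₀, hj₀, hfj₀⟩ := hu
        refine filter_card_one (mem_Msol.mpr (Or.inr (Or.inl ⟨j₀, hj₀, rfl⟩)))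
          (wbar_mem_hfun.mpr ⟨by rw [hfj₀], by rw [hfj₀]⟩) ?_
        intro e he hae
        rcases mem_Msol.mp he with ⟨i',hi',rfl⟩|⟨j',hj',rfl⟩|⟨i',hi',hp,rfl⟩|⟨i',hi',hp,rfl⟩
        · obtain ⟨hv', rfl⟩ := wbar_mem_gfun.mp hae
          exact absurd hv' hvi
        · obtain ⟨hb2, hb1⟩ := wbar_mem_hfun.mp hae
          have hfj' : f j' = (i, false) := Prod.ext hb1.symm hb2
          have hcl' : (i, false) ∈ cl j' := by
            have := (hf j' hj').1; rwa [← Prod.mk.eta (p := f j'), hfj'] at this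
          have hcl₀ : (i, false) ∈ cl j₀ := by
            have := (hf j₀ hj₀).1; rwa [← Prod.mk.eta (p := f j₀), hfj₀] at this
          obtain ⟨rfl, -⟩ := occ_unique (hocc i hi) hj' hj₀ hcl' hcl₀
          rfl
        · simp at hae
        · have : i = i' := by simpa using hae
          subst this
          exact absurd hfj₀ (hp.2 j₀ hj₀)
      · refine filter_card_one
          (mem_Msol.mpr (Or.inr (Or.inr (Or.inr ⟨i, hi,
            ⟨hvi', fun j hj hfj => hu ⟨j, hj, hfj⟩⟩, rfl⟩))))
          (Finset.mem_singleton_self _) ?_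
        intro e he hae
        rcases mem_Msol.mp he with ⟨i',hi',rfl⟩|⟨j',hj',rfl⟩|⟨i',hi',hp,rfl⟩|⟨i',hi',hp,rfl⟩
        · obtain ⟨hv', rfl⟩ := wbar_mem_gfun.mp hae
          exact absurd hv' hvi
        · obtain ⟨hb2, hb1⟩ := wbar_mem_hfun.mp hae
          exact absurd ⟨j', hj', Prod.ext hb1.symm hb2⟩ hu
        · simp at hae
        · have : i = i' := by simpa using hae
          subst this; rfl
  -- case η = s j
  · refine filter_card_one (mem_Msol.mpr (Or.inr (Or.inl ⟨j, hj, rfl⟩)))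
      (s_mem_hfun.mpr rfl) ?_
    intro e he hae
    rcases mem_Msol.mp he with ⟨i',hi',rfl⟩|⟨j',hj',rfl⟩|⟨i',hi',hp,rfl⟩|⟨i',hi',hp,rfl⟩
    · exact absurd hae s_not_mem_gfun
    · obtain rfl := s_mem_hfun.mp hae
      rfl
    · simp at hae
    · simp at hae
  -- case η = a i
  · refine filter_card_one (mem_Msol.mpr (Or.inl ⟨i, hi, rfl⟩))
      (a_mem_gfun.mpr rfl) ?_
    intro e he hae
    rcases mem_Msol.mp he with ⟨i',hi',rfl⟩|⟨j',hj',rfl⟩|⟨i',hi',hp,rfl⟩|⟨i',hi',hp,rfl⟩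
    · obtain rfl := a_mem_gfun.mp hae
      rfl
    · exact absurd hae a_not_mem_hfun
    · simp at hae
    · simp at hae
  -- case η = b i
  · have h1i : 1 ≤ i := (Finset.mem_Icc.mp hi).1
    by_cases hvi : v i = true
    · have hz1 : zeta i ∈ Finset.Icc 1 (3*n) := zeta_mem hi
      have hz2 : zeta (zeta i) ∈ Finset.Icc 1 (3*n) := zeta_mem hz1
      have hz3 : zeta (zeta (zeta i)) = i := zeta3 h1i
      have hv2' : v (zeta (zeta i)) = true := by
        have := hvz (zeta (zeta i)) hz2
        rw [hz3] at this
        exact this.symm.trans hvi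
      refine filter_card_one (mem_Msol.mpr (Or.inl ⟨zeta (zeta i), hz2, rfl⟩))
        (b_mem_gfun.mpr (Or.inl ⟨hv2', hz3.symm⟩)) ?_
      intro e he hae
      rcases mem_Msol.mp he with ⟨i',hi',rfl⟩|⟨j',hj',rfl⟩|⟨i',hi',hp,rfl⟩|⟨i',hi',hp,rfl⟩
      · rcases b_mem_gfun.mp hae with ⟨hv', hzi⟩ | ⟨hv', rfl⟩
        · have h1i' : 1 ≤ i' := (Finset.mem_Icc.mp hi').1
          have : i' = zeta (zeta i) := by
            rw [hzi]
            exact (zeta3 h1i').symm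
          rw [this]
        · exact absurd hvi (by simp [hv'])
      · exact absurd hae b_not_mem_hfun
      · simp at hae
      · simp at hae
    · have hvi' : v i = false := by simpa using hvi
      refine filter_card_one (mem_Msol.mpr (Or.inl ⟨i, hi, rfl⟩))
        (b_mem_gfun.mpr (Or.inr ⟨hvi', rfl⟩)) ?_
      intro e he hae
      rcases mem_Msol.mp he with ⟨i',hi',rfl⟩|⟨j',hj',rfl⟩|⟨i',hi',hp,rfl⟩|⟨i',hi',hp,rfl⟩
      · rcases b_mem_gfun.mp hae with ⟨hv', hzi⟩ | ⟨hv', rfl⟩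
        · have := hvz i' hi'
          rw [← hzi] at this
          rw [this] at hvi'
          rw [hvi'] at hv'
          exact absurd hv' (by simp)
        · rfl
      · exact absurd hae b_not_mem_hfun
      · simp at hae
      · simp at hae

/-! ### Forward direction -/

lemma forward_dir {n s : ℕ} {cl : ℕ → Finset (ℕ × Bool)}
    (hvar : ∀ j ∈ Finset.Icc 1 s, ∀ l ∈ cl j, l.1 ∈ Finset.Icc 1 (3 * n))
    (hocc : ∀ i ∈ Finset.Icc 1 (3 * n),
      ∑ j ∈ Finset.Icc 1 s, ((cl j).filter (fun l => l.1 = i)).card = 1)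
    (v : ℕ → Bool)
    (hv1 : ∀ j ∈ Finset.Icc 1 s, ∃ l ∈ cl j, v l.1 = l.2)
    (hv2 : ∀ k < n,
      (v (3 * k + 1) = true ∨ v (3 * k + 2) = false) ∧
      (v (3 * k + 2) = true ∨ v (3 * k + 3) = false) ∧
      (v (3 * k + 3) = true ∨ v (3 * k + 1) = false)) :
    ∃ M : Finset (Finset Elem), M ⊆ T1 n ∪ T2 n s cl ∪ T3 n ∧
      ∀ η ∈ allElems n s, (M.filter (fun e => η ∈ e)).card = 1 := by
  classical
  set f : ℕ → ℕ × Bool :=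
    fun j => if h : ∃ l ∈ cl j, v l.1 = l.2 then h.choose else (0, true) with hfdef
  have hf : ∀ j ∈ Finset.Icc 1 s, f j ∈ cl j ∧ v (f j).1 = (f j).2 := by
    intro j hj
    have h := hv1 j hj
    simp only [hfdef, dif_pos h]
    exact ⟨h.choose_spec.1, h.choose_spec.2⟩
  exact ⟨Msol n s v f, Msol_subset hvar hf, Msol_cover hocc (v_zeta v hv2) hf⟩

/-! ### Backward direction -/

lemma backward_dir {n s : ℕ} {cl : ℕ → Finset (ℕ × Bool)}
    (hvar : ∀ j ∈ Finset.Icc 1 s, ∀ l ∈ cl j, l.1 ∈ Finset.Icc 1 (3 * n))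
    (M : Finset (Finset Elem)) (hsub : M ⊆ T1 n ∪ T2 n s cl ∪ T3 n)
    (hcov : ∀ η ∈ allElems n s, (M.filter (fun e => η ∈ e)).card = 1) :
    ∃ v : ℕ → Bool,
      (∀ j ∈ Finset.Icc 1 s, ∃ l ∈ cl j, v l.1 = l.2) ∧
      (∀ k < n,
        (v (3 * k + 1) = true ∨ v (3 * k + 2) = false) ∧
        (v (3 * k + 2) = true ∨ v (3 * k + 3) = false) ∧
        (v (3 * k + 3) = true ∨ v (3 * k + 1) = false)) := by
  classical
  -- uniqueness extraction
  have hext : ∀ η : Elem, η ∈ allElems n s →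
      ∃ e₀ ∈ M, η ∈ e₀ ∧ ∀ e ∈ M, η ∈ e → e = e₀ := by
    intro η hη
    have h := hcov η hη
    rw [Finset.card_eq_one] at h
    obtain ⟨e₀, he₀⟩ := h
    have h1 : e₀ ∈ M.filter (fun e => η ∈ e) := he₀ ▸ Finset.mem_singleton_self e₀
    rw [Finset.mem_filter] at h1
    refine ⟨e₀, h1.1, h1.2, ?_⟩
    intro e he hηe
    have h2 : e ∈ M.filter (fun e => η ∈ e) := Finset.mem_filter.mpr ⟨he, hηe⟩
    rw [he₀] at h2
    simpa using h2
  -- shape of members of M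
  have hshape : ∀ e ∈ M,
      (∃ i ∈ Finset.Icc 1 (3*n), e = {Elem.w i} ∨ e = {Elem.wbar i}) ∨
      (∃ p : ℕ × ℕ, p.1 ∈ Finset.Icc 1 (3*n) ∧ p.2 ∈ Finset.Icc 1 s ∧
        (((p.1, true) ∈ cl p.2 ∧ e = {Elem.w p.1, Elem.s p.2}) ∨
         ((p.1, false) ∈ cl p.2 ∧ e = {Elem.wbar p.1, Elem.s p.2}))) ∨
      (∃ i ∈ Finset.Icc 1 (3*n),
        e = {Elem.w i, Elem.a i, Elem.b i} ∨ e = {Elem.wbar i, Elem.a i, Elem.b (zeta i)}) := by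
    intro e he
    have h := hsub he
    simp only [T1, T2, T3, Finset.mem_union, Finset.mem_image, Finset.mem_filter,
      Finset.mem_product] at h
    rcases h with ((⟨i,hi,rfl⟩|⟨i,hi,rfl⟩)|(⟨p,⟨⟨hp1,hp2⟩,hp3⟩,rfl⟩|⟨p,⟨⟨hp1,hp2⟩,hp3⟩,rfl⟩))|(⟨i,hi,rfl⟩|⟨i,hi,rfl⟩)
    · exact Or.inl ⟨i, hi, Or.inl rfl⟩
    · exact Or.inl ⟨i, hi, Or.inr rfl⟩
    · exact Or.inr (Or.inl ⟨p, hp1, hp2, Or.inl ⟨hp3, rfl⟩⟩)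
    · exact Or.inr (Or.inl ⟨p, hp1, hp2, Or.inr ⟨hp3, rfl⟩⟩)
    · exact Or.inr (Or.inr ⟨i, hi, Or.inl rfl⟩)
    · exact Or.inr (Or.inr ⟨i, hi, Or.inr rfl⟩)
  -- the valuation
  set v : ℕ → Bool :=
    fun i => decide ({Elem.wbar i, Elem.a i, Elem.b (zeta i)} ∈ M) with hvdef
  have hvtrue : ∀ i, v i = true ↔ ({Elem.wbar i, Elem.a i, Elem.b (zeta i)} : Finset Elem) ∈ M := by
    intro i; simp [hvdef]
  have hvfalse : ∀ i, v i = false ↔ ({Elem.wbar i, Elem.a i, Elem.b (zeta i)} : Finset Elem) ∉ M := by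
    intro i; simp [hvdef]
  -- analysis at a_i
  have hB1 : ∀ i ∈ Finset.Icc 1 (3*n),
      (({Elem.w i, Elem.a i, Elem.b i} : Finset Elem) ∈ M ∨
        ({Elem.wbar i, Elem.a i, Elem.b (zeta i)} : Finset Elem) ∈ M) ∧
      ¬ (({Elem.w i, Elem.a i, Elem.b i} : Finset Elem) ∈ M ∧
        ({Elem.wbar i, Elem.a i, Elem.b (zeta i)} : Finset Elem) ∈ M) := by
    intro i hi
    obtain ⟨e₀, he₀M, hae₀, huniq⟩ := hext (Elem.a i) (a_mem_all hi)
    constructor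
    · rcases hshape e₀ he₀M with ⟨i',hi',(rfl|rfl)⟩ |
        ⟨p,hp1,hp2,(⟨_,rfl⟩|⟨_,rfl⟩)⟩ | ⟨i',hi',(rfl|rfl)⟩
      · simp at hae₀
      · simp at hae₀
      · simp at hae₀
      · simp at hae₀
      · have : i = i' := by simpa using hae₀
        subst this
        exact Or.inl he₀M
      · have : i = i' := by simpa using hae₀
        subst this
        exact Or.inr he₀M
    · rintro ⟨hw, hwb⟩
      have h1 := huniq _ hw (by simp)
      have h2 := huniq _ hwb (by simp)
      rw [← h2] at h1
      have : Elem.w i ∈ ({Elem.wbar i, Elem.a i, Elem.b (zeta i)} : Finset Elem) :=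
        h1 ▸ (by simp : Elem.w i ∈ ({Elem.w i, Elem.a i, Elem.b i} : Finset Elem))
      simp at this
  -- analysis at b_i : v is constant along zeta
  have hBzeta : ∀ i ∈ Finset.Icc 1 (3*n), v (zeta i) = v i := by
    intro i hi
    have h1i : 1 ≤ i := (Finset.mem_Icc.mp hi).1
    have hzi : zeta i ∈ Finset.Icc 1 (3*n) := zeta_mem hi
    obtain ⟨e₀, he₀M, hbe₀, huniq⟩ := hext (Elem.b (zeta i)) (b_mem_all hzi)
    rcases hshape e₀ he₀M with ⟨i',hi',(rfl|rfl)⟩ |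
      ⟨p,hp1,hp2,(⟨_,rfl⟩|⟨_,rfl⟩)⟩ | ⟨i',hi',(rfl|rfl)⟩
    · simp at hbe₀
    · simp at hbe₀
    · simp at hbe₀
    · simp at hbe₀
    · -- e₀ = wtri i', so zeta i = i'
      have : zeta i = i' := by simpa using hbe₀
      subst this
      -- wbtri i ∉ M
      have hwbnot : ({Elem.wbar i, Elem.a i, Elem.b (zeta i)} : Finset Elem) ∉ M := by
        intro hmem
        have := huniq _ hmem (by simp)
        have hw : Elem.wbar i ∈ ({Elem.w (zeta i), Elem.a (zeta i), Elem.b (zeta i)} : Finset Elem) :=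
          this ▸ (by simp : Elem.wbar i ∈ ({Elem.wbar i, Elem.a i, Elem.b (zeta i)} : Finset Elem))
        simp at hw
      have hv1 : v i = false := (hvfalse i).mpr hwbnot
      have hv2 : v (zeta i) = false := by
        rw [hvfalse]
        intro hmem
        exact ((hB1 (zeta i) hzi).2 ⟨he₀M, hmem⟩)
      rw [hv1, hv2]
    · -- e₀ = wbtri i', so zeta i = zeta i', hence i = i'
      have h1i' : 1 ≤ i' := (Finset.mem_Icc.mp hi').1
      have : zeta i = zeta i' := by simpa using hbe₀
      have : i = i' := zeta_inj h1i h1i' this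
      subst this
      have hv1 : v i = true := (hvtrue i).mpr he₀M
      -- wtri (zeta i) ∉ M
      have hwnot : ({Elem.w (zeta i), Elem.a (zeta i), Elem.b (zeta i)} : Finset Elem) ∉ M := by
        intro hmem
        have := huniq _ hmem (by simp)
        have hw : Elem.w (zeta i) ∈ ({Elem.wbar i, Elem.a i, Elem.b (zeta i)} : Finset Elem) :=
          this ▸ (by simp : Elem.w (zeta i) ∈
            ({Elem.w (zeta i), Elem.a (zeta i), Elem.b (zeta i)} : Finset Elem))
        simp at hw
      have hv2 : v (zeta i) = true := by
        rw [hvtrue]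
        rcases (hB1 (zeta i) hzi).1 with h | h
        · exact absurd h hwnot
        · exact h
      rw [hv1, hv2]
  refine ⟨v, ?_, clauses_of_v_zeta v hBzeta⟩
  -- clause satisfaction
  intro j hj
  obtain ⟨e₀, he₀M, hse₀, huniq⟩ := hext (Elem.s j) (s_mem_all hj)
  rcases hshape e₀ he₀M with ⟨i',hi',(rfl|rfl)⟩ |
    ⟨p,hp1,hp2,(⟨hcl,rfl⟩|⟨hcl,rfl⟩)⟩ | ⟨i',hi',(rfl|rfl)⟩
  · simp at hse₀
  · simp at hse₀
  · -- e₀ = {w p.1, s p.2} : positive literal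
    have hj2 : j = p.2 := by simpa using hse₀
    -- wtri p.1 ∉ M
    obtain ⟨e₁, he₁M, hwe₁, huniq₁⟩ := hext (Elem.w p.1) (w_mem_all hp1)
    have hwnot : ({Elem.w p.1, Elem.a p.1, Elem.b p.1} : Finset Elem) ∉ M := by
      intro hmem
      have ha := huniq₁ _ hmem (by simp)
      have hb := huniq₁ _ he₀M (by simp)
      rw [← hb] at ha
      have : Elem.a p.1 ∈ ({Elem.w p.1, Elem.s p.2} : Finset Elem) :=
        ha ▸ (by simp : Elem.a p.1 ∈ ({Elem.w p.1, Elem.a p.1, Elem.b p.1} : Finset Elem))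
      simp at this
    have hv1 : v p.1 = true := by
      rw [hvtrue]
      rcases (hB1 p.1 hp1).1 with h | h
      · exact absurd h hwnot
      · exact h
    refine ⟨(p.1, true), ?_, hv1⟩
    rw [hj2]
    exact hcl
  · -- e₀ = {wbar p.1, s p.2} : negative literal
    have hj2 : j = p.2 := by simpa using hse₀
    obtain ⟨e₁, he₁M, hwe₁, huniq₁⟩ := hext (Elem.wbar p.1) (wbar_mem_all hp1)
    have hwbnot : ({Elem.wbar p.1, Elem.a p.1, Elem.b (zeta p.1)} : Finset Elem) ∉ M := by
      intro hmem
      have ha := huniq₁ _ hmem (by simp)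
      have hb := huniq₁ _ he₀M (by simp)
      rw [← hb] at ha
      have : Elem.a p.1 ∈ ({Elem.wbar p.1, Elem.s p.2} : Finset Elem) :=
        ha ▸ (by simp : Elem.a p.1 ∈ ({Elem.wbar p.1, Elem.a p.1, Elem.b (zeta p.1)} : Finset Elem))
      simp at this
    have hv1 : v p.1 = false := (hvfalse p.1).mpr hwbnot
    refine ⟨(p.1, false), ?_, hv1⟩
    rw [hj2]
    exact hcl
  · simp at hse₀
  · simp at hse₀

/-- the formula `φ'` (clauses `C1` given by `cl 1, …, cl s`, in
which every variable occurs exactly once, plus the cyclic clauses `C2`) is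
satisfiable iff the constructed 3DM' instance admits an exact cover. -/
theorem sat_iff_exact_cover (n s : ℕ) (hn : 1 ≤ n)
    (cl : ℕ → Finset (ℕ × Bool))
    (hvar : ∀ j ∈ Finset.Icc 1 s, ∀ l ∈ cl j, l.1 ∈ Finset.Icc 1 (3 * n))
    (hocc : ∀ i ∈ Finset.Icc 1 (3 * n),
      ∑ j ∈ Finset.Icc 1 s, ((cl j).filter (fun l => l.1 = i)).card = 1) :
    (∃ v : ℕ → Bool,
      (∀ j ∈ Finset.Icc 1 s, ∃ l ∈ cl j, v l.1 = l.2) ∧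
      (∀ k < n,
        (v (3 * k + 1) = true ∨ v (3 * k + 2) = false) ∧
        (v (3 * k + 2) = true ∨ v (3 * k + 3) = false) ∧
        (v (3 * k + 3) = true ∨ v (3 * k + 1) = false))) ↔
    (∃ M : Finset (Finset Elem), M ⊆ T1 n ∪ T2 n s cl ∪ T3 n ∧
      ∀ η ∈ allElems n s, (M.filter (fun e => η ∈ e)).card = 1) := by
  constructor
  · rintro ⟨v, hv1, hv2⟩
    exact forward_dir hvar hocc v hv1 hv2
  · rintro ⟨M, hsub, hcov⟩
    exact backward_dir hvar M hsub hcov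
end

section
/- Let w_1, w_2, w_3, w̄_1, w̄_2, w̄_3, a_1, a_2, a_3, b_1, b_2, b_3 be twelve pairwise distinct elements and consider the six sets M_1 = {w_1, a_1, b_1}, M_2 = {w_2, a_2, b_2}, M_3 = {w_3, a_3, b_3}, N_1 = {w̄_1, a_1, b_2}, N_2 = {w̄_2, a_2, b_3}, N_3 = {w̄_3, a_3, b_1}. If F ⊆ {M_1, M_2, M_3, N_1, N_2, N_3} is such that each of a_1, a_2, a_3, b_1, b_2, b_3 belongs to exactly one member of F, then F = {M_1, M_2, M_3} or F = {N_1, N_2, N_3}. -/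
lemma exactly_one_aux {α : Type*} [DecidableEq α]
    (F : Finset (Finset α)) (x : α) (A B : Finset α)
    (hAB : A ≠ B)
    (hsub : ∀ e ∈ F, x ∈ e → e = A ∨ e = B)
    (h : (F.filter (fun e => x ∈ e)).card = 1)
    (hxA : x ∈ A) (hxB : x ∈ B) :
    (A ∈ F ∧ B ∉ F) ∨ (A ∉ F ∧ B ∈ F) := by
  by_cases hA : A ∈ F <;> by_cases hB : B ∈ F
  · exfalso
    have hs : ({A, B} : Finset (Finset α)) ⊆ F.filter (fun e => x ∈ e) := by
      intro e he
      simp only [Finset.mem_insert, Finset.mem_singleton] at he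
      rcases he with rfl | rfl <;> simp [Finset.mem_filter, hA, hB, hxA, hxB]
    have := Finset.card_le_card hs
    rw [h, Finset.card_insert_of_notMem (by simpa using hAB), Finset.card_singleton] at this
    omega
  · exact Or.inl ⟨hA, hB⟩
  · exact Or.inr ⟨hA, hB⟩
  · exfalso
    have : F.filter (fun e => x ∈ e) = ∅ := by
      apply Finset.eq_empty_of_forall_notMem
      intro e he
      rw [Finset.mem_filter] at he
      rcases hsub e he.1 he.2 with rfl | rfl
      · exact hA he.1
      · exact hB he.1
    rw [this] at h; simp at h

/-- the block gadget of the 3SAT'-to-3DM' reduction. Any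
subfamily of the six block matches covering each of `a_1,a_2,a_3,b_1,b_2,b_3`
exactly once is either the three positive matches or the three negative ones. -/
theorem block_gadget {α : Type*} [DecidableEq α]
    (w1 w2 w3 wb1 wb2 wb3 a1 a2 a3 b1 b2 b3 : α)
    (hnd : ([w1, w2, w3, wb1, wb2, wb3, a1, a2, a3, b1, b2, b3] : List α).Nodup)
    (F : Finset (Finset α))
    (hF : F ⊆ {({w1, a1, b1} : Finset α), {w2, a2, b2}, {w3, a3, b3},
                {wb1, a1, b2}, {wb2, a2, b3}, {wb3, a3, b1}})
    (hcov : ∀ x ∈ ({a1, a2, a3, b1, b2, b3} : Finset α),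
      (F.filter (fun e => x ∈ e)).card = 1) :
    F = {({w1, a1, b1} : Finset α), {w2, a2, b2}, {w3, a3, b3}} ∨
    F = {({wb1, a1, b2} : Finset α), {wb2, a2, b3}, {wb3, a3, b1}} := by
  simp only [List.nodup_cons, List.mem_cons, List.not_mem_nil, or_false, not_or,
    List.nodup_nil, and_true] at hnd
  obtain ⟨⟨p12, p13, p14, p15, p16, p1a1, p1a2, p1a3, p1b1, p1b2, p1b3⟩,
    ⟨p23, p24, p25, p26, p2a1, p2a2, p2a3, p2b1, p2b2, p2b3⟩,
    ⟨p34, p35, p36, p3a1, p3a2, p3a3, p3b1, p3b2, p3b3⟩,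
    ⟨p45, p46, p4a1, p4a2, p4a3, p4b1, p4b2, p4b3⟩,
    ⟨p56, p5a1, p5a2, p5a3, p5b1, p5b2, p5b3⟩,
    ⟨p6a1, p6a2, p6a3, p6b1, p6b2, p6b3⟩,
    ⟨qa12, qa13, qab1, qab2, qab3⟩,
    ⟨qa23, qa2b1, qa2b2, qa2b3⟩,
    ⟨qa3b1, qa3b2, qa3b3⟩, ⟨qb12, qb13⟩, qb23⟩ := hnd
  set M1 : Finset α := {w1, a1, b1} with hM1
  set M2 : Finset α := {w2, a2, b2} with hM2
  set M3 : Finset α := {w3, a3, b3} with hM3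
  set N1 : Finset α := {wb1, a1, b2} with hN1
  set N2 : Finset α := {wb2, a2, b3} with hN2
  set N3 : Finset α := {wb3, a3, b1} with hN3
  have hsub : ∀ e ∈ F, e = M1 ∨ e = M2 ∨ e = M3 ∨ e = N1 ∨ e = N2 ∨ e = N3 := by
    intro e he
    have hm := hF he
    simpa only [Finset.mem_insert, Finset.mem_singleton] using hm
  -- membership facts
  have ha1M1 : a1 ∈ M1 := by simp [hM1]
  have ha1N1 : a1 ∈ N1 := by simp [hN1]
  have ha2M2 : a2 ∈ M2 := by simp [hM2]
  have ha2N2 : a2 ∈ N2 := by simp [hN2]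
  have ha3M3 : a3 ∈ M3 := by simp [hM3]
  have ha3N3 : a3 ∈ N3 := by simp [hN3]
  have hb1M1 : b1 ∈ M1 := by simp [hM1]
  have hb1N3 : b1 ∈ N3 := by simp [hN3]
  have hb2M2 : b2 ∈ M2 := by simp [hM2]
  have hb2N1 : b2 ∈ N1 := by simp [hN1]
  have hb3M3 : b3 ∈ M3 := by simp [hM3]
  have hb3N2 : b3 ∈ N2 := by simp [hN2]
  -- non-membership facts
  have na1M2 : a1 ∉ M2 := by
    simp only [hM2, Finset.mem_insert, Finset.mem_singleton, not_or]
    exact ⟨Ne.symm p2a1, qa12, qab2⟩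
  have na1M3 : a1 ∉ M3 := by
    simp only [hM3, Finset.mem_insert, Finset.mem_singleton, not_or]
    exact ⟨Ne.symm p3a1, qa13, qab3⟩
  have na1N2 : a1 ∉ N2 := by
    simp only [hN2, Finset.mem_insert, Finset.mem_singleton, not_or]
    exact ⟨Ne.symm p5a1, qa12, qab3⟩
  have na1N3 : a1 ∉ N3 := by
    simp only [hN3, Finset.mem_insert, Finset.mem_singleton, not_or]
    exact ⟨Ne.symm p6a1, qa13, qab1⟩
  have na2M1 : a2 ∉ M1 := by
    simp only [hM1, Finset.mem_insert, Finset.mem_singleton, not_or]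
    exact ⟨Ne.symm p1a2, Ne.symm qa12, qa2b1⟩
  have na2M3 : a2 ∉ M3 := by
    simp only [hM3, Finset.mem_insert, Finset.mem_singleton, not_or]
    exact ⟨Ne.symm p3a2, qa23, qa2b3⟩
  have na2N1 : a2 ∉ N1 := by
    simp only [hN1, Finset.mem_insert, Finset.mem_singleton, not_or]
    exact ⟨Ne.symm p4a2, Ne.symm qa12, qa2b2⟩
  have na2N3 : a2 ∉ N3 := by
    simp only [hN3, Finset.mem_insert, Finset.mem_singleton, not_or]
    exact ⟨Ne.symm p6a2, qa23, qa2b1⟩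
  have na3M1 : a3 ∉ M1 := by
    simp only [hM1, Finset.mem_insert, Finset.mem_singleton, not_or]
    exact ⟨Ne.symm p1a3, Ne.symm qa13, qa3b1⟩
  have na3M2 : a3 ∉ M2 := by
    simp only [hM2, Finset.mem_insert, Finset.mem_singleton, not_or]
    exact ⟨Ne.symm p2a3, Ne.symm qa23, qa3b2⟩
  have na3N1 : a3 ∉ N1 := by
    simp only [hN1, Finset.mem_insert, Finset.mem_singleton, not_or]
    exact ⟨Ne.symm p4a3, Ne.symm qa13, qa3b2⟩
  have na3N2 : a3 ∉ N2 := by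
    simp only [hN2, Finset.mem_insert, Finset.mem_singleton, not_or]
    exact ⟨Ne.symm p5a3, Ne.symm qa23, qa3b3⟩
  have nb1M2 : b1 ∉ M2 := by
    simp only [hM2, Finset.mem_insert, Finset.mem_singleton, not_or]
    exact ⟨Ne.symm p2b1, Ne.symm qa2b1, qb12⟩
  have nb1M3 : b1 ∉ M3 := by
    simp only [hM3, Finset.mem_insert, Finset.mem_singleton, not_or]
    exact ⟨Ne.symm p3b1, Ne.symm qa3b1, qb13⟩
  have nb1N1 : b1 ∉ N1 := by
    simp only [hN1, Finset.mem_insert, Finset.mem_singleton, not_or]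
    exact ⟨Ne.symm p4b1, Ne.symm qab1, qb12⟩
  have nb1N2 : b1 ∉ N2 := by
    simp only [hN2, Finset.mem_insert, Finset.mem_singleton, not_or]
    exact ⟨Ne.symm p5b1, Ne.symm qa2b1, qb13⟩
  have nb2M1 : b2 ∉ M1 := by
    simp only [hM1, Finset.mem_insert, Finset.mem_singleton, not_or]
    exact ⟨Ne.symm p1b2, Ne.symm qab2, Ne.symm qb12⟩
  have nb2M3 : b2 ∉ M3 := by
    simp only [hM3, Finset.mem_insert, Finset.mem_singleton, not_or]
    exact ⟨Ne.symm p3b2, Ne.symm qa3b2, qb23.1⟩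
  have nb2N2 : b2 ∉ N2 := by
    simp only [hN2, Finset.mem_insert, Finset.mem_singleton, not_or]
    exact ⟨Ne.symm p5b2, Ne.symm qa2b2, qb23.1⟩
  have nb2N3 : b2 ∉ N3 := by
    simp only [hN3, Finset.mem_insert, Finset.mem_singleton, not_or]
    exact ⟨Ne.symm p6b2, Ne.symm qa3b2, Ne.symm qb12⟩
  have nb3M1 : b3 ∉ M1 := by
    simp only [hM1, Finset.mem_insert, Finset.mem_singleton, not_or]
    exact ⟨Ne.symm p1b3, Ne.symm qab3, Ne.symm qb13⟩
  have nb3M2 : b3 ∉ M2 := by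
    simp only [hM2, Finset.mem_insert, Finset.mem_singleton, not_or]
    exact ⟨Ne.symm p2b3, Ne.symm qa2b3, Ne.symm qb23.1⟩
  have nb3N1 : b3 ∉ N1 := by
    simp only [hN1, Finset.mem_insert, Finset.mem_singleton, not_or]
    exact ⟨Ne.symm p4b3, Ne.symm qab3, Ne.symm qb23.1⟩
  have nb3N3 : b3 ∉ N3 := by
    simp only [hN3, Finset.mem_insert, Finset.mem_singleton, not_or]
    exact ⟨Ne.symm p6b3, Ne.symm qa3b3, Ne.symm qb13⟩
  have hw1M1 : w1 ∈ M1 := by simp [hM1]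
  have hw2M2 : w2 ∈ M2 := by simp [hM2]
  have hw3M3 : w3 ∈ M3 := by simp [hM3]
  have hw1N1 : w1 ∉ N1 := by
    simp only [hN1, Finset.mem_insert, Finset.mem_singleton, not_or]
    exact ⟨p14, p1a1, p1b2⟩
  have hw1N3 : w1 ∉ N3 := by
    simp only [hN3, Finset.mem_insert, Finset.mem_singleton, not_or]
    exact ⟨p16, p1a3, p1b1⟩
  have hw2N2 : w2 ∉ N2 := by
    simp only [hN2, Finset.mem_insert, Finset.mem_singleton, not_or]
    exact ⟨p25, p2a2, p2b3⟩
  have hw2N1 : w2 ∉ N1 := by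
    simp only [hN1, Finset.mem_insert, Finset.mem_singleton, not_or]
    exact ⟨p24, p2a1, p2b2⟩
  have hw3N3 : w3 ∉ N3 := by
    simp only [hN3, Finset.mem_insert, Finset.mem_singleton, not_or]
    exact ⟨p36, p3a3, p3b1⟩
  have hw3N2 : w3 ∉ N2 := by
    simp only [hN2, Finset.mem_insert, Finset.mem_singleton, not_or]
    exact ⟨p35, p3a2, p3b3⟩
  have hM1N1 : M1 ≠ N1 := fun h => hw1N1 (h ▸ hw1M1)
  have hM2N2 : M2 ≠ N2 := fun h => hw2N2 (h ▸ hw2M2)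
  have hM3N3 : M3 ≠ N3 := fun h => hw3N3 (h ▸ hw3M3)
  have hM1N3 : M1 ≠ N3 := fun h => hw1N3 (h ▸ hw1M1)
  have hM2N1 : M2 ≠ N1 := fun h => hw2N1 (h ▸ hw2M2)
  have hM3N2 : M3 ≠ N2 := fun h => hw3N2 (h ▸ hw3M3)
  -- the six exactly-one facts
  have h1 : (M1 ∈ F ∧ N1 ∉ F) ∨ (M1 ∉ F ∧ N1 ∈ F) := by
    refine exactly_one_aux F a1 M1 N1 hM1N1 ?_ (hcov a1 (by simp)) ha1M1 ha1N1
    intro e he hx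
    rcases hsub e he with rfl | rfl | rfl | rfl | rfl | rfl
    · exact Or.inl rfl
    · exact absurd hx na1M2
    · exact absurd hx na1M3
    · exact Or.inr rfl
    · exact absurd hx na1N2
    · exact absurd hx na1N3
  have h2 : (M2 ∈ F ∧ N2 ∉ F) ∨ (M2 ∉ F ∧ N2 ∈ F) := by
    refine exactly_one_aux F a2 M2 N2 hM2N2 ?_ (hcov a2 (by simp)) ha2M2 ha2N2
    intro e he hx
    rcases hsub e he with rfl | rfl | rfl | rfl | rfl | rfl
    · exact absurd hx na2M1
    · exact Or.inl rfl
    · exact absurd hx na2M3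
    · exact absurd hx na2N1
    · exact Or.inr rfl
    · exact absurd hx na2N3
  have h3 : (M3 ∈ F ∧ N3 ∉ F) ∨ (M3 ∉ F ∧ N3 ∈ F) := by
    refine exactly_one_aux F a3 M3 N3 hM3N3 ?_ (hcov a3 (by simp)) ha3M3 ha3N3
    intro e he hx
    rcases hsub e he with rfl | rfl | rfl | rfl | rfl | rfl
    · exact absurd hx na3M1
    · exact absurd hx na3M2
    · exact Or.inl rfl
    · exact absurd hx na3N1
    · exact absurd hx na3N2
    · exact Or.inr rfl
  have h5 : (M2 ∈ F ∧ N1 ∉ F) ∨ (M2 ∉ F ∧ N1 ∈ F) := by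
    refine exactly_one_aux F b2 M2 N1 hM2N1 ?_ (hcov b2 (by simp)) hb2M2 hb2N1
    intro e he hx
    rcases hsub e he with rfl | rfl | rfl | rfl | rfl | rfl
    · exact absurd hx nb2M1
    · exact Or.inl rfl
    · exact absurd hx nb2M3
    · exact Or.inr rfl
    · exact absurd hx nb2N2
    · exact absurd hx nb2N3
  have h6 : (M3 ∈ F ∧ N2 ∉ F) ∨ (M3 ∉ F ∧ N2 ∈ F) := by
    refine exactly_one_aux F b3 M3 N2 hM3N2 ?_ (hcov b3 (by simp)) hb3M3 hb3N2
    intro e he hx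
    rcases hsub e he with rfl | rfl | rfl | rfl | rfl | rfl
    · exact absurd hx nb3M1
    · exact absurd hx nb3M2
    · exact Or.inl rfl
    · exact absurd hx nb3N1
    · exact Or.inr rfl
    · exact absurd hx nb3N3
  -- propositional reasoning
  rcases h1 with ⟨hM1F, hN1F⟩ | ⟨hM1F, hN1F⟩
  · left
    have hM2F : M2 ∈ F := by
      rcases h5 with ⟨h, _⟩ | ⟨_, h⟩
      · exact h
      · exact absurd h hN1F
    have hN2F : N2 ∉ F := by
      rcases h2 with ⟨_, h⟩ | ⟨h, _⟩
      · exact h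
      · exact absurd hM2F h
    have hM3F : M3 ∈ F := by
      rcases h6 with ⟨h, _⟩ | ⟨_, h⟩
      · exact h
      · exact absurd h hN2F
    have hN3F : N3 ∉ F := by
      rcases h3 with ⟨_, h⟩ | ⟨h, _⟩
      · exact h
      · exact absurd hM3F h
    apply Finset.Subset.antisymm
    · intro e he
      rcases hsub e he with rfl | rfl | rfl | rfl | rfl | rfl
      · exact Finset.mem_insert_self _ _
      · exact Finset.mem_insert_of_mem (Finset.mem_insert_self _ _)
      · exact Finset.mem_insert_of_mem (Finset.mem_insert_of_mem (Finset.mem_singleton_self _))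
      · exact absurd he hN1F
      · exact absurd he hN2F
      · exact absurd he hN3F
    · intro e he
      simp only [Finset.mem_insert, Finset.mem_singleton] at he
      rcases he with rfl | rfl | rfl <;> assumption
  · right
    have hM2F : M2 ∉ F := by
      rcases h5 with ⟨_, h⟩ | ⟨h, _⟩
      · exact absurd hN1F h
      · exact h
    have hN2F : N2 ∈ F := by
      rcases h2 with ⟨h, _⟩ | ⟨_, h⟩
      · exact absurd h hM2F
      · exact h
    have hM3F : M3 ∉ F := by
      rcases h6 with ⟨_, h⟩ | ⟨h, _⟩
      · exact absurd hN2F h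
      · exact h
    have hN3F : N3 ∈ F := by
      rcases h3 with ⟨h, _⟩ | ⟨_, h⟩
      · exact absurd h hM3F
      · exact h
    apply Finset.Subset.antisymm
    · intro e he
      rcases hsub e he with rfl | rfl | rfl | rfl | rfl | rfl
      · exact absurd he hM1F
      · exact absurd he hM2F
      · exact absurd he hM3F
      · exact Finset.mem_insert_self _ _
      · exact Finset.mem_insert_of_mem (Finset.mem_insert_self _ _)
      · exact Finset.mem_insert_of_mem (Finset.mem_insert_of_mem (Finset.mem_singleton_self _))
    · intro e he
      simp only [Finset.mem_insert, Finset.mem_singleton] at he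
      rcases he with rfl | rfl | rfl <;> assumption
end

section
/- Let m ≥ 2 and k ≥ 1 be integers and let p_1, …, p_k be positive integers. Let ST(p_1,…,p_k; m) be the set of vectors (t_1,…,t_m) ∈ ℕ^m for which there exists a function a : {1,…,k} → {1,…,m} with t_i = ∑_{j : a(j) = i} p_j for every i. Then, with λ = ∑_{j=1}^k log₂ p_j, the cardinality of ST(p_1,…,p_k; m) is at most 2^{m·log₂(2k) + 2·√(λ·m·log₂ m)}. -/
open Finset in
lemma card_image_le_mul_aux (m k : ℕ) (hm : 0 < m) (p : Fin k → ℕ) (S : Finset (Fin k)) :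
    ((Finset.univ : Finset (Fin k → Fin m)).image
        (fun a => fun i : Fin m =>
          ∑ j ∈ Finset.univ.filter (fun j => a j = i), p j)).card
      ≤ ((∑ j ∈ S, p j) + 1) ^ m * m ^ Sᶜ.card := by
  classical
  set N := ∑ j ∈ S, p j with hN
  set f1 : (Fin k → Fin m) → (Fin m → ℕ) :=
    fun a i => ∑ j ∈ S.filter (fun j => a j = i), p j with hf1
  set f2 : (Fin k → Fin m) → (Fin m → ℕ) :=
    fun a i => ∑ j ∈ Sᶜ.filter (fun j => a j = i), p j with hf2
  have hsplit : ∀ (a : Fin k → Fin m),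
      (fun i : Fin m => ∑ j ∈ Finset.univ.filter (fun j => a j = i), p j)
        = (fun i => f1 a i + f2 a i) := by
    intro a; funext i
    rw [← Finset.sum_filter_add_sum_filter_not
      (Finset.univ.filter (fun j => a j = i)) (· ∈ S) p]
    congr 1
    · congr 1; ext j; simp [Finset.mem_filter]; tauto
    · congr 1; ext j; simp [Finset.mem_filter]; tauto
  have h1 : ((Finset.univ : Finset (Fin k → Fin m)).image
        (fun a => fun i : Fin m =>
          ∑ j ∈ Finset.univ.filter (fun j => a j = i), p j)).card
      ≤ ((univ.image f1).card) * ((univ.image f2).card) := by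
    have himg : (Finset.univ : Finset (Fin k → Fin m)).image
        (fun a => fun i : Fin m => ∑ j ∈ Finset.univ.filter (fun j => a j = i), p j)
        = (Finset.univ.image (fun a => (f1 a, f2 a))).image
            (fun q : (Fin m → ℕ) × (Fin m → ℕ) => fun i => q.1 i + q.2 i) := by
      rw [Finset.image_image]
      apply Finset.image_congr
      intro a _
      exact hsplit a
    rw [himg]
    calc _ ≤ (Finset.univ.image (fun a => (f1 a, f2 a))).card := Finset.card_image_le
      _ ≤ ((univ.image f1) ×ˢ (univ.image f2)).card := by
          apply Finset.card_le_card
          intro q hq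
          simp only [Finset.mem_image] at hq
          obtain ⟨a, _, rfl⟩ := hq
          simp only [Finset.mem_product, Finset.mem_image]
          exact ⟨⟨a, Finset.mem_univ a, rfl⟩, ⟨a, Finset.mem_univ a, rfl⟩⟩
      _ = _ := Finset.card_product _ _
  have h2 : (univ.image f1).card ≤ (N + 1) ^ m := by
    have hbound : ∀ t ∈ univ.image f1, ∀ i, t i ≤ N := by
      intro t ht i
      simp only [Finset.mem_image] at ht
      obtain ⟨a, _, rfl⟩ := ht
      exact Finset.sum_le_sum_of_subset (Finset.filter_subset _ _)
    let phi : (Fin m → ℕ) → (Fin m → Fin (N+1)) :=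
      fun t i => ⟨min (t i) N, Nat.lt_succ_of_le (Nat.min_le_right _ _)⟩
    have hle := Finset.card_le_card_of_injOn
      (s := univ.image f1) (t := (Finset.univ : Finset (Fin m → Fin (N+1))))
      phi (fun _ _ => Finset.mem_univ _) ?_
    · simpa using hle
    · intro t ht t' ht' h
      funext i
      have hi := congrFun h i
      have hb1 := hbound t ht i
      have hb2 := hbound t' ht' i
      have hmin : min (t i) N = min (t' i) N := congrArg Fin.val hi
      rw [min_eq_left hb1, min_eq_left hb2] at hmin
      exact hmin
  have h3 : (univ.image f2).card ≤ m ^ Sᶜ.card := by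
    have i0 : Fin m := ⟨0, hm⟩
    set e : (Fin k → Fin m) → (Fin k → Fin m) := fun a j => if j ∈ Sᶜ then a j else i0 with he
    have hfe : ∀ a, f2 (e a) = f2 a := by
      intro a; funext i
      apply Finset.sum_congr _ (fun _ _ => rfl)
      apply Finset.filter_congr
      intro j hj
      simp only [he]
      rw [if_pos hj]
    have himg : univ.image f2 = (univ.image e).image f2 := by
      rw [Finset.image_image]
      apply Finset.image_congr
      intro a _
      exact (hfe a).symm
    rw [himg]
    calc _ ≤ (univ.image e).card := Finset.card_image_le
      _ ≤ m ^ Sᶜ.card := by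
        have hle := Finset.card_le_card_of_injOn
          (f := fun (b : Fin k → Fin m) => fun j : {x // x ∈ Sᶜ} => b j.1)
          (s := univ.image e) (t := (Finset.univ : Finset ({x // x ∈ Sᶜ} → Fin m)))
          (fun _ _ => Finset.mem_univ _) ?_
        · have hcard : (Finset.univ : Finset ({x // x ∈ Sᶜ} → Fin m)).card
              = m ^ Sᶜ.card := by
            rw [Finset.card_univ]
            simp only [Fintype.card_fun, Fintype.card_coe, Fintype.card_fin]
          rw [← hcard]
          exact hle
        · intro b hb b' hb' h
          obtain ⟨a, -, rfl⟩ := Finset.mem_image.mp hb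
          obtain ⟨a', -, rfl⟩ := Finset.mem_image.mp hb'
          funext j
          by_cases hj : j ∈ Sᶜ
          · exact congrFun h ⟨j, hj⟩
          · simp only [he]
            rw [if_neg hj, if_neg hj]
  calc _ ≤ ((univ.image f1).card) * ((univ.image f2).card) := h1
    _ ≤ (N + 1) ^ m * m ^ Sᶜ.card := Nat.mul_le_mul h2 h3

/-- an explicit bound on the number of reachable machine-load
vectors when assigning `k` jobs with positive processing times `p` to `m`
identical machines. -/
theorem load_vectors_card_bound (m k : ℕ) (hm : 2 ≤ m) (hk : 1 ≤ k)
    (p : Fin k → ℕ) (hp : ∀ j, 0 < p j) :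
    (((Finset.univ : Finset (Fin k → Fin m)).image
        (fun a => fun i : Fin m =>
          ∑ j ∈ Finset.univ.filter (fun j => a j = i), p j)).card : ℝ)
      ≤ (2 : ℝ) ^ ((m : ℝ) * Real.logb 2 (2 * k)
          + 2 * Real.sqrt ((∑ j, Real.logb 2 (p j)) * m * Real.logb 2 m)) := by
  classical
  set lam : ℝ := ∑ j, Real.logb 2 (p j) with hlamdef
  set L : ℝ := Real.logb 2 m with hLdef
  set T : ℝ := Real.sqrt (lam * L / m) with hTdef
  set s : ℝ := Real.sqrt (lam * m * L) with hsdef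
  have hm0 : (0:ℝ) < m := by positivity
  have hm0' : (m:ℝ) ≠ 0 := ne_of_gt hm0
  have hk0 : (1:ℝ) ≤ k := by exact_mod_cast hk
  have hlam0 : 0 ≤ lam := Finset.sum_nonneg fun j _ =>
    Real.logb_nonneg one_lt_two (by exact_mod_cast hp j)
  have hL1 : (1:ℝ) ≤ L := by
    rw [hLdef]
    calc (1:ℝ) = Real.logb 2 2 := (Real.logb_self_eq_one one_lt_two).symm
      _ ≤ Real.logb 2 m := Real.logb_le_logb_of_le one_lt_two (by norm_num)
        (by exact_mod_cast hm)
  have hT0 : 0 ≤ T := Real.sqrt_nonneg _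
  have hs0 : 0 ≤ s := Real.sqrt_nonneg _
  have h2T1 : (1:ℝ) ≤ (2:ℝ) ^ T := by
    calc (1:ℝ) = (2:ℝ) ^ (0:ℝ) := (Real.rpow_zero 2).symm
      _ ≤ (2:ℝ) ^ T := Real.rpow_le_rpow_of_exponent_le one_le_two hT0
  -- the small/large split
  set S : Finset (Fin k) := Finset.univ.filter (fun j => (p j : ℝ) ≤ (2:ℝ) ^ T) with hSdef
  set N : ℕ := ∑ j ∈ S, p j with hNdef
  have hcard := card_image_le_mul_aux m k (by omega) p S
  have hcast : (((Finset.univ : Finset (Fin k → Fin m)).image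
        (fun a => fun i : Fin m =>
          ∑ j ∈ Finset.univ.filter (fun j => a j = i), p j)).card : ℝ)
      ≤ ((N:ℝ) + 1) ^ m * (m:ℝ) ^ Sᶜ.card := by exact_mod_cast hcard
  -- bound the small part
  have hmT : (T : ℝ) * m = s := by
    rw [hTdef, hsdef]
    rw [show (m:ℝ) = Real.sqrt ((m:ℝ)^2) by rw [Real.sqrt_sq hm0.le]]
    rw [← Real.sqrt_mul (by positivity)]
    congr 1
    field_simp
    ring_nf
    rw [Real.sq_sqrt (by positivity)]
  have hNle : (N:ℝ) ≤ (k:ℝ) * (2:ℝ) ^ T := by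
    have h1 : (N:ℝ) = ∑ j ∈ S, (p j : ℝ) := by rw [hNdef]; push_cast; rfl
    rw [h1]
    calc ∑ j ∈ S, (p j : ℝ) ≤ ∑ j ∈ S, (2:ℝ) ^ T := by
          apply Finset.sum_le_sum
          intro j hj
          exact (Finset.mem_filter.mp hj).2
      _ = (S.card : ℝ) * (2:ℝ) ^ T := by rw [Finset.sum_const, nsmul_eq_mul]
      _ ≤ (k:ℝ) * (2:ℝ) ^ T := by
          apply mul_le_mul_of_nonneg_right _ (by positivity)
          have := Finset.card_le_univ S
          simp only [Finset.card_univ, Fintype.card_fin] at this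
          exact_mod_cast this
  have hN1 : (N:ℝ) + 1 ≤ (2 * k) * (2:ℝ) ^ T := by nlinarith
  have hA : ((N:ℝ) + 1) ^ m ≤ (2:ℝ) ^ ((m:ℝ) * Real.logb 2 (2 * k) + s) := by
    calc ((N:ℝ) + 1) ^ m ≤ ((2 * k) * (2:ℝ) ^ T) ^ m := by
          apply pow_le_pow_left₀ (by positivity) hN1
      _ = (2 * (k:ℝ)) ^ m * ((2:ℝ) ^ T) ^ m := mul_pow _ _ _
      _ = (2:ℝ) ^ ((m:ℝ) * Real.logb 2 (2 * k)) * (2:ℝ) ^ s := by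
          have e1 : (2 * (k:ℝ)) = (2:ℝ) ^ (Real.logb 2 (2 * (k:ℝ))) :=
            (Real.rpow_logb two_pos (by norm_num) (by positivity)).symm
          congr 1
          · conv_lhs => rw [e1]
            rw [← Real.rpow_natCast ((2:ℝ) ^ (Real.logb 2 (2*(k:ℝ)))) m,
              ← Real.rpow_mul (by norm_num), mul_comm]
          · rw [← Real.rpow_natCast ((2:ℝ) ^ T) m, ← Real.rpow_mul (by norm_num), hmT]
      _ = _ := (Real.rpow_add two_pos _ _).symm
  -- bound the large part
  have hB : ((m:ℝ)) ^ Sᶜ.card ≤ (2:ℝ) ^ s := by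
    by_cases hc : Sᶜ.card = 0
    · rw [hc, pow_zero]
      calc (1:ℝ) = (2:ℝ) ^ (0:ℝ) := (Real.rpow_zero 2).symm
        _ ≤ (2:ℝ) ^ s := Real.rpow_le_rpow_of_exponent_le one_le_two hs0
    · obtain ⟨j0, hj0⟩ := Finset.card_ne_zero.mp hc
      have hgt : ∀ j ∈ Sᶜ, T < Real.logb 2 (p j) := by
        intro j hj
        have hnot : ¬ ((p j : ℝ) ≤ (2:ℝ) ^ T) := by
          have := Finset.mem_compl.mp hj
          simpa [hSdef] using this
        push_neg at hnot
        calc T = Real.logb 2 ((2:ℝ) ^ T) := (Real.logb_rpow two_pos (by norm_num)).symm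
          _ < Real.logb 2 (p j) := by
            apply Real.logb_lt_logb one_lt_two (by positivity) hnot
      have hlampos : 0 < lam := by
        have h1 : T < Real.logb 2 (p j0) := hgt j0 hj0
        have h2 : Real.logb 2 (p j0) ≤ lam := by
          rw [hlamdef]
          apply Finset.single_le_sum (f := fun j => Real.logb 2 (p j))
            (fun j _ => Real.logb_nonneg one_lt_two (by exact_mod_cast hp j))
            (Finset.mem_univ j0)
        linarith
      have hTpos : 0 < T := by
        rw [hTdef]
        apply Real.sqrt_pos.mpr
        have : (0:ℝ) < L := by linarith
        positivity
      have hsumT : (Sᶜ.card : ℝ) * T ≤ lam := by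
        calc (Sᶜ.card : ℝ) * T = ∑ _j ∈ Sᶜ, T := by
              rw [Finset.sum_const, nsmul_eq_mul]
          _ ≤ ∑ j ∈ Sᶜ, Real.logb 2 (p j) := by
              apply Finset.sum_le_sum
              intro j hj
              exact (hgt j hj).le
          _ ≤ lam := by
              rw [hlamdef]
              apply Finset.sum_le_sum_of_subset_of_nonneg (Finset.subset_univ _)
              intro j _ _
              exact Real.logb_nonneg one_lt_two (by exact_mod_cast hp j)
      have hsT : s * T = lam * L := by
        rw [hsdef, hTdef, ← Real.sqrt_mul (by positivity)]
        rw [show lam * (m:ℝ) * L * (lam * L / m) = (lam * L)^2 by field_simp]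
        exact Real.sqrt_sq (by positivity)
      have hkey : L * (Sᶜ.card : ℝ) ≤ s := by
        have h5 : (L * (Sᶜ.card : ℝ)) * T ≤ s * T := by
          have h6 : L * ((Sᶜ.card : ℝ) * T) ≤ L * lam :=
            mul_le_mul_of_nonneg_left hsumT (by linarith)
          calc (L * (Sᶜ.card : ℝ)) * T = L * ((Sᶜ.card : ℝ) * T) := by ring
            _ ≤ L * lam := h6
            _ = lam * L := by ring
            _ = s * T := hsT.symm
        exact le_of_mul_le_mul_right h5 hTpos
      calc ((m:ℝ)) ^ Sᶜ.card = ((2:ℝ) ^ L) ^ Sᶜ.card := by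
            rw [hLdef, Real.rpow_logb two_pos (by norm_num) hm0]
        _ = (2:ℝ) ^ (L * (Sᶜ.card : ℝ)) := by
            rw [← Real.rpow_natCast ((2:ℝ) ^ L) _, ← Real.rpow_mul (by norm_num)]
        _ ≤ (2:ℝ) ^ s := Real.rpow_le_rpow_of_exponent_le one_le_two hkey
  calc (((Finset.univ : Finset (Fin k → Fin m)).image
        (fun a => fun i : Fin m =>
          ∑ j ∈ Finset.univ.filter (fun j => a j = i), p j)).card : ℝ)
      ≤ ((N:ℝ) + 1) ^ m * (m:ℝ) ^ Sᶜ.card := hcast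
    _ ≤ (2:ℝ) ^ ((m:ℝ) * Real.logb 2 (2 * k) + s) * (2:ℝ) ^ s := by
        apply mul_le_mul hA hB (by positivity) (by positivity)
    _ = (2:ℝ) ^ ((m:ℝ) * Real.logb 2 (2 * k) + 2 * s) := by
        rw [← Real.rpow_add two_pos]
        ring_nf
end

section
/- Let φ be a CNF formula with variables y_1, …, y_n in which every variable occurs exactly three times (counting occurrences of literals over that variable in all clauses). Then there exists a CNF formula φ' over variables z_1, …, z_{3n} such that: the clauses of φ' are partitioned into C1 and C2; C1 is obtained from the clauses of φ by replacing, for each k ∈ {0,…,n−1}, the three occurrences of y_{k+1} by z_{3k+1}, z_{3k+2}, z_{3k+3} respectively (keeping polarities), so that every variable z_i occurs exactly once in the clauses of C1; C2 = ⋃_{k=0}^{n−1} {(z_{3k+1} ∨ ¬z_{3k+2}), (z_{3k+2} ∨ ¬z_{3k+3}), (z_{3k+3} ∨ ¬z_{3k+1})}; and φ' is satisfiable if and only if φ is satisfiable. -/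
/-- A clause: a finite set of literals, a literal being a variable (a natural
number) together with a polarity (`true` = positive). -/
abbrev Clause : Type := Finset (ℕ × Bool)

/-- count of occurrences of variable `i` in clause `j`. -/
def tvCnt (φ : List Clause) (i j : ℕ) : ℕ :=
  ((φ.getD j ∅).filter (fun l => l.1 = i)).card

/-- occurrences of variable `i` in clauses before `j`. -/
def tvBef (φ : List Clause) (i j : ℕ) : ℕ :=
  ((φ.take j).map (fun c => (c.filter (fun l => l.1 = i)).card)).sum

/-- the index (0,1,2) of an occurrence. -/
def tvIdx (φ : List Clause) (j : ℕ) (l : ℕ × Bool) : ℕ :=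
  tvBef φ l.1 j + (if l.2 = true ∧ (l.1, false) ∈ φ.getD j ∅ then 1 else 0)

/-- the renaming. -/
def tvRen (φ : List Clause) (j : ℕ) (l : ℕ × Bool) : ℕ × Bool :=
  (3 * (l.1 - 1) + 1 + tvIdx φ j l, l.2)

lemma tvBef_succ (φ : List Clause) (i j : ℕ) (h : j < φ.length) :
    tvBef φ i (j + 1) = tvBef φ i j + tvCnt φ i j := by
  unfold tvBef tvCnt
  rw [List.take_succ, List.map_append, List.sum_append, List.getElem?_eq_getElem h,
    List.getD_eq_getElem φ ∅ h]
  simp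

lemma tvBef_mono (φ : List Clause) (i : ℕ) : Monotone (tvBef φ i) := by
  apply monotone_nat_of_le_succ
  intro j
  unfold tvBef
  rw [List.take_succ, List.map_append, List.sum_append]
  exact Nat.le_add_right _ _

lemma tvBef_eq_sum (φ : List Clause) (i : ℕ) : ∀ j, j ≤ φ.length →
    tvBef φ i j = ∑ j' ∈ Finset.range j, tvCnt φ i j'
  | 0, _ => by simp [tvBef]
  | (m+1), h => by
      rw [tvBef_succ φ i m (by omega), Finset.sum_range_succ,
        tvBef_eq_sum φ i m (by omega)]

/-- occurrences of variable `i` as (clause index, literal) pairs. -/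
def tvOcc (φ : List Clause) (i : ℕ) : Finset (ℕ × (ℕ × Bool)) :=
  (Finset.range φ.length).biUnion
    (fun j => ((φ.getD j ∅).filter (fun l => l.1 = i)).image (fun l => (j, l)))

lemma tvMem_occ {φ : List Clause} {i : ℕ} {p : ℕ × (ℕ × Bool)} :
    p ∈ tvOcc φ i ↔ p.1 < φ.length ∧ p.2 ∈ φ.getD p.1 ∅ ∧ p.2.1 = i := by
  obtain ⟨j, l⟩ := p
  simp only [tvOcc, Finset.mem_biUnion, Finset.mem_range, Finset.mem_image,
    Finset.mem_filter, Prod.mk.injEq]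
  constructor
  · rintro ⟨j', hj', l', ⟨hl', hli⟩, rfl, rfl⟩
    exact ⟨hj', hl', hli⟩
  · rintro ⟨hj, hl, hli⟩
    exact ⟨j, hj, l, ⟨hl, hli⟩, rfl, rfl⟩

lemma tvCard_occ (φ : List Clause) (i : ℕ) : (tvOcc φ i).card = tvBef φ i φ.length := by
  rw [tvBef_eq_sum φ i φ.length le_rfl, tvOcc, Finset.card_biUnion]
  · exact Finset.sum_congr rfl (fun j _ => by
      rw [Finset.card_image_of_injective _ (fun a b h => by simpa using h)]; rfl)
  · intro x _ y _ hxy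
    simp only [Finset.disjoint_left, Finset.mem_image]
    rintro a ⟨l, _, rfl⟩ ⟨l', _, hl'⟩
    exact hxy ((Prod.mk.injEq _ _ _ _).mp hl').1.symm

lemma tvIdx_lt (φ : List Clause) (j : ℕ) (l : ℕ × Bool) (hj : j < φ.length)
    (hl : l ∈ φ.getD j ∅) :
    tvBef φ l.1 j ≤ tvIdx φ j l ∧ tvIdx φ j l < tvBef φ l.1 (j + 1) := by
  obtain ⟨li, lb⟩ := l
  rw [tvBef_succ φ (li, lb).1 j hj]
  unfold tvIdx tvCnt
  by_cases hc : (li, lb).2 = true ∧ ((li, lb).1, false) ∈ φ.getD j ∅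
  · rw [if_pos hc]
    obtain ⟨hb, hf⟩ := hc
    simp only at hb hf
    subst hb
    have hsub : ({(li, true), (li, false)} : Finset (ℕ × Bool)) ⊆
        (φ.getD j ∅).filter (fun x => x.1 = (li, true).1) := by
      intro x hx
      simp only [Finset.mem_insert, Finset.mem_singleton] at hx
      rcases hx with rfl | rfl
      · exact Finset.mem_filter.mpr ⟨hl, rfl⟩
      · exact Finset.mem_filter.mpr ⟨hf, rfl⟩
    have hcard := Finset.card_le_card hsub
    have h2 : ({(li, true), (li, false)} : Finset (ℕ × Bool)).card = 2 := by simp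
    omega
  · rw [if_neg hc]
    have hmem : (li, lb) ∈ (φ.getD j ∅).filter (fun x => x.1 = (li, lb).1) :=
      Finset.mem_filter.mpr ⟨hl, rfl⟩
    have := Finset.card_pos.mpr ⟨(li, lb), hmem⟩
    omega

lemma tvIdx_inj (φ : List Clause) (i : ℕ) :
    ∀ p ∈ tvOcc φ i, ∀ q ∈ tvOcc φ i,
      tvIdx φ p.1 p.2 = tvIdx φ q.1 q.2 → p = q := by
  rintro ⟨pj, pi, pb⟩ hp ⟨qj, qi, qb⟩ hq h
  obtain ⟨hpj, hpl, hpi⟩ := tvMem_occ.mp hp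
  obtain ⟨hqj, hql, hqi⟩ := tvMem_occ.mp hq
  simp only at hpj hpl hpi hqj hql hqi h
  rw [hpi] at hpl h
  rw [hqi] at hql h
  rw [hpi, hqi]
  clear hp hq hpi hqi
  have hplt := tvIdx_lt φ pj (i, pb) hpj hpl
  have hqlt := tvIdx_lt φ qj (i, qb) hqj hql
  simp only at hplt hqlt
  rcases lt_trichotomy pj qj with hlt | heq | hlt
  · have := tvBef_mono φ i (show pj + 1 ≤ qj from hlt)
    omega
  · subst heq
    by_cases hb : pb = qb
    · rw [hb]
    · exfalso
      rcases Bool.eq_false_or_eq_true pb with hb1 | hb1 <;>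
        rcases Bool.eq_false_or_eq_true qb with hb2 | hb2
      · exact hb (hb1.trans hb2.symm)
      · -- p true, q false
        subst hb1; subst hb2
        unfold tvIdx at h
        rw [if_pos ⟨rfl, hql⟩, if_neg (by simp)] at h
        simp only at h
        omega
      · -- p false, q true
        subst hb1; subst hb2
        unfold tvIdx at h
        rw [if_neg (by simp), if_pos ⟨rfl, hpl⟩] at h
        simp only at h
        omega
      · exact hb (hb1.trans hb2.symm)
  · have := tvBef_mono φ i (show qj + 1 ≤ pj from hlt)
    omega

lemma tvOcc_exists (φ : List Clause) (i : ℕ)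
    (htot : tvBef φ i φ.length = 3) (r : ℕ) (hr : r < 3) :
    ∃! p : ℕ × (ℕ × Bool), p ∈ tvOcc φ i ∧ tvIdx φ p.1 p.2 = r := by
  have hmaps : ∀ p ∈ tvOcc φ i, tvIdx φ p.1 p.2 ∈ Finset.range 3 := by
    intro p hp
    obtain ⟨hj, hl, hpi⟩ := tvMem_occ.mp hp
    have h1 := (tvIdx_lt φ p.1 p.2 hj hl).2
    have h2 := tvBef_mono φ p.2.1 (show p.1 + 1 ≤ φ.length from hj)
    rw [hpi] at h1 h2
    rw [Finset.mem_range]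
    omega
  have hsurj := Finset.surj_on_of_inj_on_of_card_le
    (s := tvOcc φ i) (t := Finset.range 3)
    (fun p _ => tvIdx φ p.1 p.2) (fun p hp => hmaps p hp)
    (fun p q hp hq h => tvIdx_inj φ i p hp q hq h)
    (by rw [tvCard_occ φ i, htot]; simp) r (Finset.mem_range.mpr hr)
  obtain ⟨p, hp, hpr⟩ := hsurj
  refine ⟨p, ⟨hp, hpr.symm⟩, ?_⟩
  rintro q ⟨hq, hqr⟩
  exact tvIdx_inj φ i q hq p hp (by rw [hqr, hpr])

/-- the second application of Tovey's transformation. If every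
variable `y_i` (for `i ∈ {1,…,n}`) occurs exactly three times in `φ`, then
there is a per-clause renaming `σ` of literals, sending each occurrence of a
literal over `y_i` to a literal with the same polarity over one of
`z_{3(i−1)+1}, z_{3(i−1)+2}, z_{3(i−1)+3}`, such that in the resulting list of
clauses `C1` every variable `z_i` occurs exactly once, and `φ` is satisfiable
iff `C1` together with the cyclic clauses
`(z_{3k+1} ∨ ¬z_{3k+2}), (z_{3k+2} ∨ ¬z_{3k+3}), (z_{3k+3} ∨ ¬z_{3k+1})`
(for `0 ≤ k < n`) is satisfiable. -/
theorem tovey_second_transformation (n : ℕ) (hn : 1 ≤ n) (φ : List Clause)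
    (hvar : ∀ c ∈ φ, ∀ l ∈ c, l.1 ∈ Finset.Icc 1 n)
    (hocc : ∀ i ∈ Finset.Icc 1 n,
      (φ.map (fun c => (c.filter (fun l => l.1 = i)).card)).sum = 3) :
    ∃ σ : ℕ → (ℕ × Bool) → (ℕ × Bool),
      (∀ j < φ.length, ∀ l ∈ φ.getD j ∅,
        (σ j l).2 = l.2 ∧
        (σ j l).1 ∈ Finset.Icc (3 * (l.1 - 1) + 1) (3 * (l.1 - 1) + 3)) ∧
      (∀ i ∈ Finset.Icc 1 (3 * n),
        ∑ j ∈ Finset.range φ.length,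
          (((φ.getD j ∅).image (σ j)).filter (fun l => l.1 = i)).card = 1) ∧
      ((∃ v : ℕ → Bool, ∀ c ∈ φ, ∃ l ∈ c, v l.1 = l.2) ↔
        (∃ v : ℕ → Bool,
          (∀ j < φ.length, ∃ l ∈ (φ.getD j ∅).image (σ j), v l.1 = l.2) ∧
          (∀ k < n,
            (v (3 * k + 1) = true ∨ v (3 * k + 2) = false) ∧
            (v (3 * k + 2) = true ∨ v (3 * k + 3) = false) ∧
            (v (3 * k + 3) = true ∨ v (3 * k + 1) = false)))) := by
  have hcl : ∀ j, j < φ.length → φ.getD j ∅ ∈ φ := by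
    intro j hj
    rw [List.getD_eq_getElem φ ∅ hj]
    exact List.getElem_mem _
  have htot : ∀ i ∈ Finset.Icc 1 n, tvBef φ i φ.length = 3 := by
    intro i hi
    unfold tvBef
    rw [List.take_length]
    exact hocc i hi
  have hidx3 : ∀ j < φ.length, ∀ l ∈ φ.getD j ∅, tvIdx φ j l < 3 := by
    intro j hj l hl
    have hi := hvar _ (hcl j hj) l hl
    have h1 := (tvIdx_lt φ j l hj hl).2
    have h2 := tvBef_mono φ l.1 (show j + 1 ≤ φ.length from hj)
    have h3 := htot _ hi
    omega
  refine ⟨tvRen φ, ?_, ?_, ?_⟩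
  · -- range of σ
    intro j hj l hl
    refine ⟨rfl, ?_⟩
    have hi := hvar _ (hcl j hj) l hl
    rw [Finset.mem_Icc] at hi
    have h3 := hidx3 j hj l hl
    simp only [tvRen, Finset.mem_Icc]
    omega
  · -- every z-variable occurs exactly once in C1
    intro i hi
    rw [Finset.mem_Icc] at hi
    set q := (i - 1) / 3 + 1 with hqdef
    set r := (i - 1) % 3 with hrdef
    have hq1 : q ∈ Finset.Icc 1 n := by rw [Finset.mem_Icc]; omega
    have hqr : 3 * (q - 1) + 1 + r = i := by omega
    have hr3 : r < 3 := by omega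
    have hq1' : 1 ≤ q := by omega
    obtain ⟨⟨j0, l0⟩, ⟨hp0, hp0r⟩, hp0u⟩ := tvOcc_exists φ q (htot q hq1) r hr3
    have hj0 : j0 < φ.length := (tvMem_occ.mp hp0).1
    have hsummand : ∀ j ∈ Finset.range φ.length,
        (((φ.getD j ∅).image (tvRen φ j)).filter (fun l => l.1 = i)).card
        = ((φ.getD j ∅).filter (fun l => l.1 = q ∧ tvIdx φ j l = r)).card := by
      intro j hjr
      have hj := Finset.mem_range.mp hjr
      have hinj : Set.InjOn (tvRen φ j) ↑(φ.getD j ∅) := by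
        intro a ha b hb hab
        have ha' : a ∈ φ.getD j ∅ := ha
        have hb' : b ∈ φ.getD j ∅ := hb
        have hia := hvar _ (hcl j hj) a ha'
        have hib := hvar _ (hcl j hj) b hb'
        rw [Finset.mem_Icc] at hia hib
        have h3a := hidx3 j hj a ha'
        have h3b := hidx3 j hj b hb'
        simp only [tvRen, Prod.mk.injEq] at hab
        obtain ⟨a1, a2⟩ := a
        obtain ⟨b1, b2⟩ := b
        simp only at hab hia hib ⊢
        obtain ⟨hab1, hab2⟩ := hab
        subst hab2
        simp only [Prod.mk.injEq, and_true]
        omega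
      rw [Finset.filter_image,
        Finset.card_image_of_injOn (hinj.mono (Finset.coe_subset.mpr (Finset.filter_subset _ _)))]
      congr 1
      apply Finset.filter_congr
      intro l hl
      have hil := hvar _ (hcl j hj) l hl
      rw [Finset.mem_Icc] at hil
      have h3 := hidx3 j hj l hl
      simp only [tvRen]
      omega
    rw [Finset.sum_congr rfl hsummand]
    have hzero : ∀ j ∈ Finset.range φ.length, j ≠ j0 →
        ((φ.getD j ∅).filter (fun l => l.1 = q ∧ tvIdx φ j l = r)).card = 0 := by
      intro j hjr hne
      rw [Finset.card_eq_zero, Finset.filter_eq_empty_iff]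
      rintro l hl ⟨hlq, hlr⟩
      exact hne (congrArg Prod.fst
        (hp0u (j, l) ⟨tvMem_occ.mpr ⟨Finset.mem_range.mp hjr, hl, hlq⟩, hlr⟩))
    have hmain : ((φ.getD j0 ∅).filter (fun l => l.1 = q ∧ tvIdx φ j0 l = r)).card = 1 := by
      rw [Finset.card_eq_one]
      refine ⟨l0, ?_⟩
      ext l
      simp only [Finset.mem_filter, Finset.mem_singleton]
      constructor
      · rintro ⟨hl, hlq, hlr⟩
        have h := hp0u (j0, l) ⟨tvMem_occ.mpr ⟨hj0, hl, hlq⟩, hlr⟩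
        exact congrArg Prod.snd h
      · rintro rfl
        obtain ⟨_, hl0, hl0q⟩ := tvMem_occ.mp hp0
        exact ⟨hl0, hl0q, hp0r⟩
    rw [Finset.sum_eq_single j0 hzero
      (fun h => absurd (Finset.mem_range.mpr hj0) h), hmain]
  · -- satisfiability equivalence
    constructor
    · rintro ⟨v, hv⟩
      refine ⟨fun m => v ((m - 1) / 3 + 1), ?_, ?_⟩
      · intro j hj
        obtain ⟨l, hl, hvl⟩ := hv _ (hcl j hj)
        refine ⟨tvRen φ j l, Finset.mem_image_of_mem _ hl, ?_⟩
        have hi := hvar _ (hcl j hj) l hl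
        rw [Finset.mem_Icc] at hi
        have h3 := hidx3 j hj l hl
        show v (((tvRen φ j l).1 - 1) / 3 + 1) = (tvRen φ j l).2
        simp only [tvRen]
        have e : (3 * (l.1 - 1) + 1 + tvIdx φ j l - 1) / 3 + 1 = l.1 := by omega
        rw [e]
        exact hvl
      · intro k hk
        have e1 : (3 * k + 1 - 1) / 3 + 1 = k + 1 := by omega
        have e2 : (3 * k + 2 - 1) / 3 + 1 = k + 1 := by omega
        have e3 : (3 * k + 3 - 1) / 3 + 1 = k + 1 := by omega
        simp only [e1, e2, e3]
        rcases Bool.eq_false_or_eq_true (v (k + 1)) with h | h <;> simp [h]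
    · rintro ⟨v, hv1, hv2⟩
      refine ⟨fun i => v (3 * (i - 1) + 1), ?_⟩
      intro c hc
      obtain ⟨j, hj, hcj⟩ := List.mem_iff_getElem.mp hc
      have hgd : φ.getD j ∅ = c := by rw [List.getD_eq_getElem φ ∅ hj, hcj]
      obtain ⟨l', hl', hvl'⟩ := hv1 j hj
      obtain ⟨l, hl, rfl⟩ := Finset.mem_image.mp hl'
      have hlc : l ∈ c := by rw [← hgd]; exact hl
      have hi := hvar _ hc l hlc
      rw [Finset.mem_Icc] at hi
      have h3 := hidx3 j hj l hl
      have ht : v (3 * (l.1 - 1) + 1) = v (3 * (l.1 - 1) + 2) ∧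
          v (3 * (l.1 - 1) + 2) = v (3 * (l.1 - 1) + 3) := by
        obtain ⟨ha, hb, hc'⟩ := hv2 (l.1 - 1) (by omega)
        revert ha hb hc'
        generalize v (3 * (l.1 - 1) + 1) = a
        generalize v (3 * (l.1 - 1) + 2) = b
        generalize v (3 * (l.1 - 1) + 3) = c2
        cases a <;> cases b <;> cases c2 <;> decide
      simp only [tvRen] at hvl'
      refine ⟨l, hlc, ?_⟩
      show v (3 * (l.1 - 1) + 1) = l.2
      rcases (show tvIdx φ j l = 0 ∨ tvIdx φ j l = 1 ∨ tvIdx φ j l = 2 by omega) with h | h | h <;>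
        rw [h] at hvl'
      · simpa using hvl'
      · have e : 3 * (l.1 - 1) + 1 + 1 = 3 * (l.1 - 1) + 2 := by omega
        rw [e] at hvl'
        rw [ht.1]
        exact hvl'
      · have e : 3 * (l.1 - 1) + 1 + 2 = 3 * (l.1 - 1) + 3 := by omega
        rw [e] at hvl'
        rw [ht.1, ht.2]
        exact hvl'
end
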